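/- arXiv:1708.05213 — 6 statements merged into one kernel-verified Lean document; each statement's English description precedes it below -/
import Mathlib

section
/- If C₁ and C₂ are closed convex cones in ℝⁿ such that C₁ ∪ C₂ is convex, then C₁° ∪ C₂° is convex, and (C₁ ∩ C₂)° = C₁° ∪ C₂° and (C₁ ∪ C₂)° = C₁° ∩ C₂°. -/
open scoped RealInnerProductSpace
open MeasureTheory

attribute [local instance] Classical.propDecidable

noncomputable section

abbrev E (n : ℕ) : Type := EuclideanSpace ℝ (Fin n)

/-- The dual cone `C° = {x : ⟪x,y⟫ ≤ 0 for all y ∈ C}`. -/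
def polarDual {n : ℕ} (C : Set (E n)) : Set (E n) := {x | ∀ y ∈ C, ⟪x, y⟫ ≤ 0}

/-- A convex polyhedral cone: a finite intersection of closed halfspaces whose
boundaries contain the origin (empty intersection = ℝⁿ). -/
def IsPolyhedralCone {n : ℕ} (C : Set (E n)) : Prop :=
  ∃ s : Finset (E n), C = {x | ∀ u ∈ s, ⟪u, x⟫ ≤ 0}

/-- A (nonempty) compact convex polytope: the convex hull of a nonempty finite set. -/
def IsPolytope {n : ℕ} (P : Set (E n)) : Prop :=
  ∃ s : Finset (E n), s.Nonempty ∧ P = convexHull ℝ (s : Set (E n))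

/-- A polyhedron: a finite union of compact convex polytopes (possibly empty). -/
def IsPolyhedron {n : ℕ} (P : Set (E n)) : Prop :=
  ∃ F : Finset (Set (E n)), (∀ A ∈ F, IsPolytope A) ∧ P = ⋃₀ F

/-- The tangent cone `Tan(P,x) = {v : [x, x+λv] ⊆ P for some λ > 0}`. -/
def Tan {n : ℕ} (P : Set (E n)) (x : E n) : Set (E n) :=
  {v | ∃ l : ℝ, 0 < l ∧ segment ℝ x (x + l • v) ⊆ P}

/-- The (linear) dimension of a cone, i.e. the dimension of its linear span. -/
def coneDim {n : ℕ} (C : Set (E n)) : ℕ := Module.finrank ℝ (Submodule.span ℝ C)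

/-- A valuation on the family of convex polyhedral cones. -/
def IsConeValuation {n : ℕ} (φ : Set (E n) → ℝ) : Prop :=
  ∀ C D : Set (E n), IsPolyhedralCone C → IsPolyhedralCone D → IsPolyhedralCone (C ∪ D) →
    φ (C ∪ D) + φ (C ∩ D) = φ C + φ D

/-- A simple valuation vanishes on cones of dimension `< n`. -/
def IsSimple {n : ℕ} (φ : Set (E n) → ℝ) : Prop :=
  ∀ C : Set (E n), IsPolyhedralCone C → coneDim C < n → φ C = 0

/-- A finite union of convex polyhedral cones (possibly empty). -/
def IsConeUnion {n : ℕ} (S : Set (E n)) : Prop :=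
  ∃ F : Finset (Set (E n)), (∀ A ∈ F, IsPolyhedralCone A) ∧ S = ⋃₀ F

/-- A relatively open polyhedral cone: the relative interior of a convex polyhedral cone. -/
def IsROCone {n : ℕ} (A : Set (E n)) : Prop :=
  ∃ C : Set (E n), IsPolyhedralCone C ∧ A = intrinsicInterior ℝ C

/-- A finite union of relatively open polyhedral cones (possibly empty). -/
def IsROConeUnion {n : ℕ} (S : Set (E n)) : Prop :=
  ∃ F : Finset (Set (E n)), (∀ A ∈ F, IsROCone A) ∧ S = ⋃₀ F

/-- The normal cone `N(P,x) = {u : ⟪u, y - x⟫ ≤ 0 for all y ∈ P}`. -/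
def normalCone {n : ℕ} (P : Set (E n)) (x : E n) : Set (E n) :=
  {u | ∀ y ∈ P, ⟪u, y - x⟫ ≤ 0}

/-- The outer angle `Γ(C) = σ(C° ∩ S^{n-1})`, expressed via the normalized
solid-angle (cone-volume) measure, which agrees with the normalized spherical
Lebesgue measure of `C° ∩ S^{n-1}` for cones `C°`. -/
def outerAngle {n : ℕ} (C : Set (E n)) : ℝ :=
  (volume (polarDual C ∩ Metric.closedBall (0 : E n) 1)).toReal /
    (volume (Metric.closedBall (0 : E n) 1)).toReal

/-- If `C₁, C₂` are closed convex cones with `C₁ ∪ C₂` convex, then `C₁° ∪ C₂°` is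
convex, `(C₁ ∩ C₂)° = C₁° ∪ C₂°` and `(C₁ ∪ C₂)° = C₁° ∩ C₂°`. -/
theorem stmt0 {n : ℕ} (C₁ C₂ : Set (E n))
    (hcl₁ : IsClosed C₁) (hcl₂ : IsClosed C₂)
    (hcv₁ : Convex ℝ C₁) (hcv₂ : Convex ℝ C₂)
    (h0₁ : (0 : E n) ∈ C₁) (h0₂ : (0 : E n) ∈ C₂)
    (hcone₁ : ∀ (c : ℝ), 0 ≤ c → ∀ x ∈ C₁, c • x ∈ C₁)
    (hcone₂ : ∀ (c : ℝ), 0 ≤ c → ∀ x ∈ C₂, c • x ∈ C₂)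
    (hU : Convex ℝ (C₁ ∪ C₂)) :
    Convex ℝ (polarDual C₁ ∪ polarDual C₂) ∧
    polarDual (C₁ ∩ C₂) = polarDual C₁ ∪ polarDual C₂ ∧
    polarDual (C₁ ∪ C₂) = polarDual C₁ ∩ polarDual C₂ := by
  have key : polarDual (C₁ ∩ C₂) = polarDual C₁ ∪ polarDual C₂ := by
    apply Set.Subset.antisymm
    · intro x hx
      by_contra h
      have h1 : x ∉ polarDual C₁ := fun hh => h (Or.inl hh)
      have h2 : x ∉ polarDual C₂ := fun hh => h (Or.inr hh)
      obtain ⟨y₁, hy₁, hxy₁⟩ : ∃ y ∈ C₁, 0 < ⟪x, y⟫ := by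
        by_contra hc; push_neg at hc
        exact h1 fun y hy => hc y hy
      obtain ⟨y₂, hy₂, hxy₂⟩ : ∃ y ∈ C₂, 0 < ⟪x, y⟫ := by
        by_contra hc; push_neg at hc
        exact h2 fun y hy => hc y hy
      have hseg : segment ℝ y₁ y₂ ⊆ C₁ ∪ C₂ :=
        hU.segment_subset (Or.inl hy₁) (Or.inr hy₂)
      have hpre : IsPreconnected (segment ℝ y₁ y₂) :=
        (convex_segment y₁ y₂).isPreconnected
      obtain ⟨y, hyseg, hyC₁, hyC₂⟩ :=
        (isPreconnected_closed_iff.mp hpre) C₁ C₂ hcl₁ hcl₂ hseg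
          ⟨y₁, left_mem_segment ℝ y₁ y₂, hy₁⟩ ⟨y₂, right_mem_segment ℝ y₁ y₂, hy₂⟩
      obtain ⟨a, b, ha, hb, hab, rfl⟩ := hyseg
      have hpos : 0 < ⟪x, a • y₁ + b • y₂⟫ := by
        rw [inner_add_right, real_inner_smul_right, real_inner_smul_right]
        rcases eq_or_lt_of_le ha with h0 | h0
        · nlinarith
        · nlinarith [mul_pos h0 hxy₁, mul_nonneg hb hxy₂.le]
      exact absurd (hx _ ⟨hyC₁, hyC₂⟩) (not_le.mpr hpos)
    · rintro x (hx | hx) y ⟨hy₁, hy₂⟩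
      · exact hx y hy₁
      · exact hx y hy₂
  have hconv : Convex ℝ (polarDual (C₁ ∩ C₂)) := by
    intro p hp q hq a b ha hb hab y hy
    have := hp y hy; have := hq y hy
    rw [inner_add_left, real_inner_smul_left, real_inner_smul_left]
    nlinarith
  refine ⟨key ▸ hconv, key, ?_⟩
  ext x
  constructor
  · intro hx
    exact ⟨fun y hy => hx y (Or.inl hy), fun y hy => hx y (Or.inr hy)⟩
  · rintro ⟨hx₁, hx₂⟩ y (hy | hy)
    · exact hx₁ y hy
    · exact hx₂ y hy
end
end

section
/- If C is a closed convex polyhedral cone in ℝⁿ, then its dual cone C° is also a closed convex polyhedral cone. -/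
open scoped RealInnerProductSpace
open MeasureTheory

attribute [local instance] Classical.propDecidable

noncomputable section

namespace Aux
variable {n : ℕ}

/-- The cone generated by a finite set. -/
def Cgen (t : Finset (E n)) : Set (E n) :=
  {x | ∃ f : E n → ℝ, (∀ v ∈ t, 0 ≤ f v) ∧ ∑ v ∈ t, f v • v = x}

lemma zero_mem_Cgen (t : Finset (E n)) : (0 : E n) ∈ Cgen t :=
  ⟨0, fun _ _ => le_refl 0, by simp⟩

lemma mem_Cgen_of_mem {t : Finset (E n)} {v : E n} (h : v ∈ t) : v ∈ Cgen t := by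
  refine ⟨fun z => if z = v then 1 else 0, fun z _ => by positivity, ?_⟩
  have : ∀ z ∈ t, ((if z = v then (1:ℝ) else 0) • z) = if z = v then v else 0 := by
    intro z _; split <;> simp_all
  rw [Finset.sum_congr rfl this, Finset.sum_ite_eq' t v (fun _ => v)]
  simp [h]

lemma add_mem_Cgen {t : Finset (E n)} {x y : E n} (hx : x ∈ Cgen t) (hy : y ∈ Cgen t) :
    x + y ∈ Cgen t := by
  obtain ⟨f, hf, hfx⟩ := hx; obtain ⟨g, hg, hgy⟩ := hy
  refine ⟨f + g, fun v hv => add_nonneg (hf v hv) (hg v hv), ?_⟩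
  simp only [Pi.add_apply, add_smul, Finset.sum_add_distrib, hfx, hgy]

lemma smul_mem_Cgen {t : Finset (E n)} {x : E n} {c : ℝ} (hc : 0 ≤ c) (hx : x ∈ Cgen t) :
    c • x ∈ Cgen t := by
  obtain ⟨f, hf, hfx⟩ := hx
  refine ⟨fun v => c * f v, fun v hv => mul_nonneg hc (hf v hv), ?_⟩
  rw [← hfx, Finset.smul_sum]
  exact Finset.sum_congr rfl fun v _ => (smul_smul c (f v) v).symm

lemma sum_mem_Cgen {t : Finset (E n)} {ι : Type*} (s : Finset ι) (g : ι → E n)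
    (h : ∀ i ∈ s, g i ∈ Cgen t) : (∑ i ∈ s, g i) ∈ Cgen t := by
  classical
  induction s using Finset.induction with
  | empty => simpa using zero_mem_Cgen t
  | insert _ _ hni ih =>
    rw [Finset.sum_insert hni]
    exact add_mem_Cgen (h _ (Finset.mem_insert_self _ _))
      (ih fun i hi => h i (Finset.mem_insert_of_mem hi))

lemma Cgen_subset_of_forall {t₁ t₂ : Finset (E n)} (h : ∀ w ∈ t₁, w ∈ Cgen t₂) :
    Cgen t₁ ⊆ Cgen t₂ := by
  rintro x ⟨f, hf, rfl⟩
  exact sum_mem_Cgen t₁ _ fun v hv => smul_mem_Cgen (hf v hv) (h v hv)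

lemma Cgen_mono {t₁ t₂ : Finset (E n)} (h : t₁ ⊆ t₂) : Cgen t₁ ⊆ Cgen t₂ :=
  Cgen_subset_of_forall fun w hw => mem_Cgen_of_mem (h hw)

lemma inner_nonpos_of_mem_Cgen {t : Finset (E n)} {u x : E n}
    (h : ∀ w ∈ t, ⟪u, w⟫ ≤ 0) (hx : x ∈ Cgen t) : ⟪u, x⟫ ≤ 0 := by
  obtain ⟨f, hf, rfl⟩ := hx
  rw [inner_sum]
  refine Finset.sum_nonpos fun w hw => ?_
  rw [real_inner_smul_right]
  exact mul_nonpos_of_nonneg_of_nonpos (hf w hw) (h w hw)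

end Aux

namespace Aux
variable {n : ℕ}

/-- Fourier–Motzkin elimination step. -/
def FM (u : E n) (t : Finset (E n)) : Finset (E n) :=
  t.filter (fun v => ⟪u, v⟫ ≤ 0) ∪
    ((t.filter (fun v => 0 < ⟪u, v⟫)) ×ˢ (t.filter (fun w => ⟪u, w⟫ ≤ 0))).image
      (fun p => ⟪u, p.1⟫ • p.2 - ⟪u, p.2⟫ • p.1)

lemma sum_update (t : Finset (E n)) (f : E n → ℝ) {v : E n} (hv : v ∈ t) (c : ℝ) :
    ∑ z ∈ t, (Function.update f v c) z • z = (∑ z ∈ t, f z • z) + (c - f v) • v := by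
  rw [← Finset.add_sum_erase t _ hv, ← Finset.add_sum_erase t (fun z => f z • z) hv]
  have h1 : ∀ z ∈ t.erase v, (Function.update f v c) z • z = f z • z := by
    intro z hz
    rw [Function.update_of_ne (Finset.ne_of_mem_erase hz)]
  rw [Finset.sum_congr rfl h1, Function.update_self]
  module

lemma FM_key (u : E n) (t : Finset (E n)) :
    ∀ k : ℕ, ∀ f : E n → ℝ, (∀ v ∈ t, 0 ≤ f v) →
      (t.filter (fun v => f v ≠ 0)).card ≤ k →
      ⟪u, ∑ v ∈ t, f v • v⟫ ≤ 0 → (∑ v ∈ t, f v • v) ∈ Cgen (FM u t) := by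
  intro k
  induction k with
  | zero =>
    intro f hf hcard _
    have h0 : ∀ v ∈ t, f v = 0 := by
      intro v hv
      by_contra h
      have : v ∈ t.filter (fun v => f v ≠ 0) := Finset.mem_filter.2 ⟨hv, h⟩
      have := Finset.card_pos.2 ⟨v, this⟩
      omega
    have : ∑ v ∈ t, f v • v = 0 := by
      refine Finset.sum_eq_zero fun v hv => ?_
      rw [h0 v hv, zero_smul]
    rw [this]; exact zero_mem_Cgen _
  | succ k ih =>
    intro f hf hcard hinner
    by_cases hP : ∀ v ∈ t, 0 < ⟪u, v⟫ → f v = 0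
    · -- all positive-inner generators have zero coefficient
      have heq : ∑ v ∈ t, f v • v = ∑ v ∈ t.filter (fun v => ⟪u, v⟫ ≤ 0), f v • v := by
        refine (Finset.sum_subset (Finset.filter_subset _ _) fun v hv hnv => ?_).symm
        have : ¬ ⟪u, v⟫ ≤ 0 := fun h => hnv (Finset.mem_filter.2 ⟨hv, h⟩)
        rw [hP v hv (lt_of_not_ge this), zero_smul]
      rw [heq]
      refine Cgen_mono Finset.subset_union_left ?_
      exact ⟨f, fun v hv => hf v (Finset.mem_filter.1 hv).1, rfl⟩
    · push_neg at hP
      obtain ⟨v, hv, huv, hfv⟩ := hP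
      have hfv' : 0 < f v := lt_of_le_of_ne (hf v hv) (Ne.symm hfv)
      -- find a generator with negative inner product and positive coefficient
      have hw : ∃ w ∈ t, f w * ⟪u, w⟫ < 0 := by
        by_contra h
        push_neg at h
        have h1 : ⟪u, ∑ z ∈ t, f z • z⟫ = ∑ z ∈ t, f z * ⟪u, z⟫ := by
          rw [inner_sum]
          exact Finset.sum_congr rfl fun z _ => real_inner_smul_right _ _ _
        have h2 : f v * ⟪u, v⟫ ≤ ∑ z ∈ t, f z * ⟪u, z⟫ :=
          Finset.single_le_sum (fun z hz => h z hz) hv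
        nlinarith [mul_pos hfv' huv]
      obtain ⟨w, hwt, hw⟩ := hw
      have hfw : 0 < f w := by
        rcases (hf w hwt).lt_or_eq with h | h
        · exact h
        · exfalso; rw [← h, zero_mul] at hw; exact lt_irrefl 0 hw
      have huw : ⟪u, w⟫ < 0 := by nlinarith
      have hvw : v ≠ w := fun h => by rw [h] at huv; linarith
      set μ := min (f v / (-⟪u, w⟫)) (f w / ⟪u, v⟫) with hμdef
      have hμ1 : μ ≤ f v / (-⟪u, w⟫) := min_le_left _ _
      have hμ2 : μ ≤ f w / ⟪u, v⟫ := min_le_right _ _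
      have hμ : 0 ≤ μ :=
        le_min (div_nonneg hfv'.le (by linarith)) (div_nonneg hfw.le huv.le)
      have hg : (⟪u, v⟫ • w - ⟪u, w⟫ • v) ∈ FM u t := by
        refine Finset.mem_union_right _ (Finset.mem_image.2 ⟨(v, w), ?_, rfl⟩)
        exact Finset.mem_product.2 ⟨Finset.mem_filter.2 ⟨hv, huv⟩,
          Finset.mem_filter.2 ⟨hwt, huw.le⟩⟩
      set f' := Function.update (Function.update f v (f v - μ * (-⟪u, w⟫))) w
        (f w - μ * ⟪u, v⟫) with hf'def
      have hf'w : f' w = f w - μ * ⟪u, v⟫ := by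
        rw [hf'def, Function.update_self]
      have hf'v : f' v = f v - μ * (-⟪u, w⟫) := by
        rw [hf'def, Function.update_of_ne hvw, Function.update_self]
      have hf'z : ∀ z, z ≠ v → z ≠ w → f' z = f z := by
        intro z hzv hzw
        rw [hf'def, Function.update_of_ne hzw, Function.update_of_ne hzv]
      have hsum : ∑ z ∈ t, f' z • z
          = (∑ z ∈ t, f z • z) - μ • (⟪u, v⟫ • w - ⟪u, w⟫ • v) := by
        rw [hf'def, sum_update t _ hwt, sum_update t f hv,
          Function.update_of_ne (Ne.symm hvw)]
        module
      have hbw : μ * ⟪u, v⟫ ≤ f w := by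
        have := mul_le_mul_of_nonneg_right hμ2 huv.le
        rwa [div_mul_cancel₀ _ (ne_of_gt huv)] at this
      have hbv : μ * (-⟪u, w⟫) ≤ f v := by
        have h0 : (0:ℝ) < -⟪u, w⟫ := by linarith
        have := mul_le_mul_of_nonneg_right hμ1 h0.le
        rwa [div_mul_cancel₀ _ (ne_of_gt h0)] at this
      have hf' : ∀ z ∈ t, 0 ≤ f' z := by
        intro z hz
        by_cases hzw : z = w
        · subst hzw; rw [hf'w]; linarith
        by_cases hzv : z = v
        · subst hzv; rw [hf'v]; linarith
        · rw [hf'z z hzv hzw]; exact hf z hz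
      have hinner' : ⟪u, ∑ z ∈ t, f' z • z⟫ ≤ 0 := by
        rw [hsum, inner_sub_right, inner_smul_right]
        have : ⟪u, ⟪u, v⟫ • w - ⟪u, w⟫ • v⟫ = (0:ℝ) := by
          rw [inner_sub_right, real_inner_smul_right, real_inner_smul_right]; ring
        rw [this]
        simpa using hinner
      have hcard' : (t.filter (fun z => f' z ≠ 0)).card ≤ k := by
        have hne : (-⟪u, w⟫) ≠ 0 := by linarith
        have hne' : ⟪u, v⟫ ≠ 0 := ne_of_gt huv
        rcases min_cases (f v / (-⟪u, w⟫)) (f w / ⟪u, v⟫) with ⟨hmin, _⟩ | ⟨hmin, _⟩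
        · -- f' v = 0
          have hfv0 : f' v = 0 := by
            rw [hf'v, hμdef, hmin, div_mul_cancel₀ _ hne, sub_self]
          have hsub : t.filter (fun z => f' z ≠ 0)
              ⊆ (t.filter (fun z => f z ≠ 0)).erase v := by
            intro z hz
            obtain ⟨hzt, hz0⟩ := Finset.mem_filter.1 hz
            have hzv : z ≠ v := fun h => hz0 (h ▸ hfv0)
            refine Finset.mem_erase.2 ⟨hzv, Finset.mem_filter.2 ⟨hzt, ?_⟩⟩
            rcases eq_or_ne z w with rfl | hzw
            · exact ne_of_gt hfw
            · rw [hf'z z hzv hzw] at hz0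
              exact hz0
          have hvmem : v ∈ t.filter (fun z => f z ≠ 0) := Finset.mem_filter.2 ⟨hv, hfv⟩
          have := Finset.card_le_card hsub
          rw [Finset.card_erase_of_mem hvmem] at this
          omega
        · -- f' w = 0
          have hfw0 : f' w = 0 := by
            rw [hf'w, hμdef, hmin, div_mul_cancel₀ _ hne', sub_self]
          have hsub : t.filter (fun z => f' z ≠ 0)
              ⊆ (t.filter (fun z => f z ≠ 0)).erase w := by
            intro z hz
            obtain ⟨hzt, hz0⟩ := Finset.mem_filter.1 hz
            have hzw : z ≠ w := fun h => hz0 (h ▸ hfw0)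
            refine Finset.mem_erase.2 ⟨hzw, Finset.mem_filter.2 ⟨hzt, ?_⟩⟩
            rcases eq_or_ne z v with rfl | hzv
            · exact ne_of_gt hfv'
            · rw [hf'z z hzv hzw] at hz0
              exact hz0
          have hwmem : w ∈ t.filter (fun z => f z ≠ 0) :=
            Finset.mem_filter.2 ⟨hwt, ne_of_gt hfw⟩
          have := Finset.card_le_card hsub
          rw [Finset.card_erase_of_mem hwmem] at this
          omega
      have hx' := ih f' hf' hcard' hinner'
      have hxeq : ∑ z ∈ t, f z • z
          = (∑ z ∈ t, f' z • z) + μ • (⟪u, v⟫ • w - ⟪u, w⟫ • v) := by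
        rw [hsum]; abel
      rw [hxeq]
      exact add_mem_Cgen hx' (smul_mem_Cgen hμ (mem_Cgen_of_mem hg))

lemma FM_spec (u : E n) (t : Finset (E n)) :
    Cgen t ∩ {x | ⟪u, x⟫ ≤ 0} = Cgen (FM u t) := by
  apply Set.Subset.antisymm
  · rintro x ⟨⟨f, hf, rfl⟩, hx⟩
    exact FM_key u t _ f hf le_rfl hx
  · intro x hx
    have hgen : ∀ g ∈ FM u t, g ∈ Cgen t ∧ ⟪u, g⟫ ≤ 0 := by
      intro g hg
      rcases Finset.mem_union.1 hg with hg | hg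
      · obtain ⟨hgt, hgu⟩ := Finset.mem_filter.1 hg
        exact ⟨mem_Cgen_of_mem hgt, hgu⟩
      · obtain ⟨⟨a, b⟩, hab, rfl⟩ := Finset.mem_image.1 hg
        obtain ⟨ha, hb⟩ := Finset.mem_product.1 hab
        obtain ⟨hat, hau⟩ := Finset.mem_filter.1 ha
        obtain ⟨hbt, hbu⟩ := Finset.mem_filter.1 hb
        constructor
        · have : ⟪u, a⟫ • b - ⟪u, b⟫ • a = ⟪u, a⟫ • b + (-⟪u, b⟫) • a := by module
          rw [this]
          exact add_mem_Cgen (smul_mem_Cgen hau.le (mem_Cgen_of_mem hbt))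
            (smul_mem_Cgen (by linarith) (mem_Cgen_of_mem hat))
        · rw [inner_sub_right, real_inner_smul_right, real_inner_smul_right]
          simp [mul_comm]
      
    exact ⟨Cgen_subset_of_forall (fun g hg => (hgen g hg).1) hx,
      inner_nonpos_of_mem_Cgen (fun g hg => (hgen g hg).2) hx⟩

end Aux

namespace Aux
variable {n : ℕ}

/-- Every element of `E n` is a nonnegative combination of `±` basis vectors. -/
lemma exists_Cgen_univ : ∃ t : Finset (E n), Cgen t = Set.univ := by
  classical
  set B := Module.finBasis ℝ (E n) with hB
  refine ⟨Finset.univ.image B ∪ Finset.univ.image (fun i => -B i), ?_⟩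
  apply Set.eq_univ_of_forall
  intro x
  have hx : ∑ i, B.repr x i • B i = x := B.sum_repr x
  rw [← hx]
  refine sum_mem_Cgen _ _ fun i _ => ?_
  rcases le_or_gt 0 (B.repr x i) with h | h
  · exact smul_mem_Cgen h (mem_Cgen_of_mem
      (Finset.mem_union_left _ (Finset.mem_image.2 ⟨i, Finset.mem_univ _, rfl⟩)))
  · have : B.repr x i • B i = (-(B.repr x i)) • (-B i) := by module
    rw [this]
    exact smul_mem_Cgen (by linarith) (mem_Cgen_of_mem
      (Finset.mem_union_right _ (Finset.mem_image.2 ⟨i, Finset.mem_univ _, rfl⟩)))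

/-- Weyl–Minkowski: every polyhedral cone is finitely generated. -/
lemma weyl (s : Finset (E n)) :
    ∃ t : Finset (E n), {x : E n | ∀ u ∈ s, ⟪u, x⟫ ≤ 0} = Cgen t := by
  classical
  induction s using Finset.induction with
  | empty =>
    obtain ⟨t, ht⟩ := exists_Cgen_univ (n := n)
    exact ⟨t, by simp [ht]⟩
  | @insert a s ha ih =>
    obtain ⟨t, ht⟩ := ih
    refine ⟨FM a t, ?_⟩
    rw [← FM_spec, ← ht]
    ext x
    simp only [Set.mem_setOf_eq, Set.mem_inter_iff, Finset.mem_insert]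
    constructor
    · exact fun h => ⟨fun u hu => h u (Or.inr hu), h a (Or.inl rfl)⟩
    · rintro ⟨h1, h2⟩ u (rfl | hu)
      · exact h2
      · exact h1 u hu

end Aux


/-- The dual cone of a convex polyhedral cone is a convex polyhedral cone. -/
theorem stmt1 {n : ℕ} (C : Set (E n)) (hC : IsPolyhedralCone C) :
    IsPolyhedralCone (polarDual C) := by
  obtain ⟨s, rfl⟩ := hC
  obtain ⟨t, ht⟩ := Aux.weyl s
  refine ⟨t, ?_⟩
  ext x
  constructor
  · intro hx u hu
    rw [real_inner_comm]
    exact hx u (ht ▸ Aux.mem_Cgen_of_mem hu)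
  · intro hx y hy
    rw [ht] at hy
    exact Aux.inner_nonpos_of_mem_Cgen (fun w hw => by rw [real_inner_comm]; exact hx w hw) hy
end
end

section
/- If φ is a valuation on the family of convex polyhedral cones in ℝⁿ, then the function φ°(C) := φ(C°) is also a valuation on convex polyhedral cones. -/
open scoped RealInnerProductSpace
open MeasureTheory

attribute [local instance] Classical.propDecidable

noncomputable section

section AuxStmt2

variable {n : ℕ}

private lemma zero_polyhedral' : ∃ t : Finset (E n),
    ({(0 : E n)} : Set (E n)) = {x | ∀ u ∈ t, ⟪u, x⟫ ≤ 0} := by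
  refine ⟨(Finset.univ.image fun i => EuclideanSpace.single i (1:ℝ)) ∪
    (Finset.univ.image fun i => -EuclideanSpace.single i (1:ℝ)), ?_⟩
  ext x
  simp only [Set.mem_singleton_iff, Set.mem_setOf_eq, Finset.mem_union, Finset.mem_image,
    Finset.mem_univ, true_and]
  constructor
  · rintro rfl u h
    rcases h with ⟨i, rfl⟩ | ⟨i, rfl⟩ <;> simp
  · intro h
    ext i
    have h1 := h _ (Or.inl ⟨i, rfl⟩)
    have h2 := h _ (Or.inr ⟨i, rfl⟩)
    rw [inner_neg_left] at h2
    rw [EuclideanSpace.inner_single_left] at h1 h2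
    simp at h1 h2 ⊢
    linarith

private lemma fm_step' (t : Finset (E n)) (v : E n) :
    ∃ t' : Finset (E n),
      {x : E n | ∀ u ∈ t', ⟪u, x⟫ ≤ 0} =
        {x : E n | ∃ l : ℝ, 0 ≤ l ∧ ∀ u ∈ t, ⟪u, x⟫ ≤ l * ⟪u, v⟫} := by
  refine ⟨t.filter (fun u => ⟪u, v⟫ ≤ 0) ∪
    ((t.filter fun u => 0 < ⟪u, v⟫) ×ˢ (t.filter fun u => ⟪u, v⟫ < 0)).image
      (fun p => ⟪p.1, v⟫ • p.2 - ⟪p.2, v⟫ • p.1), ?_⟩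
  ext x
  simp only [Set.mem_setOf_eq, Finset.mem_union, Finset.mem_filter, Finset.mem_image,
    Finset.mem_product, Prod.exists]
  constructor
  · intro hx
    set P := t.filter (fun u => 0 < ⟪u, v⟫) with hP
    refine ⟨P.fold max 0 (fun u => ⟪u, x⟫ / ⟪u, v⟫), ?_, ?_⟩
    · exact (Finset.le_fold_max _).mpr (Or.inl le_rfl)
    · intro u hu
      rcases lt_trichotomy (⟪u, v⟫ : ℝ) 0 with hneg | hzero | hpos
      · have hau : ⟪u, x⟫ ≤ 0 := hx u (Or.inl ⟨hu, hneg.le⟩)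
        have hl : P.fold max 0 (fun u => ⟪u, x⟫ / ⟪u, v⟫) ≤ ⟪u, x⟫ / ⟪u, v⟫ := by
          refine (Finset.fold_max_le _).mpr ⟨div_nonneg_of_nonpos hau hneg.le, ?_⟩
          intro p hp
          rw [hP, Finset.mem_filter] at hp
          obtain ⟨hpt, hpv⟩ := hp
          have hc : ⟪⟪p, v⟫ • u - ⟪u, v⟫ • p, x⟫ ≤ 0 :=
            hx _ (Or.inr ⟨p, u, ⟨⟨hpt, hpv⟩, hu, hneg⟩, rfl⟩)
          rw [inner_sub_left, real_inner_smul_left, real_inner_smul_left] at hc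
          have keygen : ∀ au bu ap bp : ℝ, bu ≠ 0 → bp ≠ 0 →
              au / bu - ap / bp = (bp * au - bu * ap) / (bu * bp) := by
            intros au bu ap bp h1 h2
            field_simp
          have key := keygen ⟪u, x⟫ ⟪u, v⟫ ⟪p, x⟫ ⟪p, v⟫ hneg.ne hpv.ne'
          have hden : (⟪u, v⟫ * ⟪p, v⟫ : ℝ) ≤ 0 :=
            mul_nonpos_of_nonpos_of_nonneg hneg.le hpv.le
          have := div_nonneg_of_nonpos hc hden
          rw [← key] at this
          linarith
        rw [le_div_iff_of_neg hneg] at hl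
        linarith [hl]
      · have hau : ⟪u, x⟫ ≤ 0 := hx u (Or.inl ⟨hu, hzero.le⟩)
        rw [hzero, mul_zero]; exact hau
      · have hl : ⟪u, x⟫ / ⟪u, v⟫ ≤ P.fold max 0 (fun u => ⟪u, x⟫ / ⟪u, v⟫) :=
          (Finset.le_fold_max _).mpr (Or.inr ⟨u, Finset.mem_filter.mpr ⟨hu, hpos⟩, le_rfl⟩)
        rw [div_le_iff₀ hpos] at hl
        linarith [hl]
  · rintro ⟨l, hl0, hl⟩ u hu
    rcases hu with ⟨hut, huv⟩ | ⟨p, w, ⟨⟨hpt, hpv⟩, hwt, hwv⟩, rfl⟩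
    · have := hl u hut
      nlinarith
    · rw [inner_sub_left, real_inner_smul_left, real_inner_smul_left]
      have h1 := hl p hpt
      have h2 := hl w hwt
      nlinarith

private lemma weyl' (s : Finset (E n)) :
    ∃ t : Finset (E n),
      ((Submodule.span {c : ℝ // 0 ≤ c} (↑s : Set (E n)) : Submodule _ _) : Set (E n)) =
        {x | ∀ u ∈ t, ⟪u, x⟫ ≤ 0} := by
  induction s using Finset.induction_on with
  | empty => simpa using zero_polyhedral'
  | @insert a s ha ih =>
    obtain ⟨t, ht⟩ := ih
    obtain ⟨t', ht'⟩ := fm_step' t a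
    refine ⟨t', ?_⟩
    rw [ht']
    ext x
    rw [SetLike.mem_coe, Finset.coe_insert, Submodule.span_insert, Submodule.mem_sup]
    constructor
    · rintro ⟨y, hy, z, hz, rfl⟩
      obtain ⟨c, rfl⟩ := Submodule.mem_span_singleton.mp hy
      have hzset : z ∈ {x : E n | ∀ u ∈ t, ⟪u, x⟫ ≤ 0} := by
        rw [← ht]; exact hz
      refine ⟨(c : ℝ), c.2, fun u hu => ?_⟩
      have hz' := hzset u hu
      have hca : (c • a : E n) = (c : ℝ) • a := rfl
      rw [hca, inner_add_right, real_inner_smul_right]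
      linarith
    · rintro ⟨l, hl0, hl⟩
      refine ⟨l • a, Submodule.mem_span_singleton.mpr ⟨⟨l, hl0⟩, rfl⟩, x - l • a, ?_, by abel⟩
      have hz : x - l • a ∈ {x : E n | ∀ u ∈ t, ⟪u, x⟫ ≤ 0} := by
        intro u hu
        rw [inner_sub_right, real_inner_smul_right]
        linarith [hl u hu]
      rw [← ht] at hz
      exact hz

private lemma span_polar' (s : Finset (E n)) :
    polarDual ((Submodule.span {c : ℝ // 0 ≤ c} (↑s : Set (E n)) : Submodule _ _) : Set (E n)) =
      {x | ∀ u ∈ s, ⟪u, x⟫ ≤ 0} := by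
  ext x
  constructor
  · intro hx u hu
    rw [real_inner_comm]
    exact hx u (Submodule.subset_span hu)
  · intro hx y hy
    rw [SetLike.mem_coe] at hy
    induction hy using Submodule.span_induction with
    | mem z hz => rw [real_inner_comm]; exact hx z hz
    | zero => simp
    | add z w _ _ hz hw => rw [inner_add_right]; linarith
    | smul c z _ hz =>
      have hcz : (c • z : E n) = (c : ℝ) • z := rfl
      rw [hcz, real_inner_smul_right]
      exact mul_nonpos_of_nonneg_of_nonpos c.2 hz

private lemma polar_polyhedral' {C : Set (E n)} (hC : IsPolyhedralCone C) :
    IsPolyhedralCone (polarDual C) := by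
  obtain ⟨s, rfl⟩ := hC
  obtain ⟨t, ht⟩ := weyl' s
  refine ⟨t, ?_⟩
  rw [← span_polar' s]
  ext x
  constructor
  · intro hx u hu
    have hu' : u ∈ polarDual
        ((Submodule.span {c : ℝ // 0 ≤ c} (↑s : Set (E n)) : Submodule _ _) : Set (E n)) := by
      intro y hy
      rw [ht] at hy
      exact hy u hu
    rw [real_inner_comm]
    exact hx u hu'
  · intro hx y hy
    have hxK : x ∈ ((Submodule.span {c : ℝ // 0 ≤ c} (↑s : Set (E n)) : Submodule _ _) :
        Set (E n)) := by
      rw [ht]; exact hx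
    rw [real_inner_comm]
    exact hy x hxK

private lemma polar_union' (C D : Set (E n)) :
    polarDual (C ∪ D) = polarDual C ∩ polarDual D := by
  ext x
  simp only [polarDual, Set.mem_setOf_eq, Set.mem_inter_iff, Set.mem_union]
  constructor
  · intro h
    exact ⟨fun y hy => h y (Or.inl hy), fun y hy => h y (Or.inr hy)⟩
  · rintro ⟨h1, h2⟩ y (hy | hy)
    exacts [h1 y hy, h2 y hy]

private lemma polyhedral_convex {C : Set (E n)} (hC : IsPolyhedralCone C) : Convex ℝ C := by
  obtain ⟨s, rfl⟩ := hC
  intro x hx y hy a b ha hb hab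
  intro u hu
  rw [inner_add_right, real_inner_smul_right, real_inner_smul_right]
  have h1 := hx u hu
  have h2 := hy u hu
  nlinarith

private lemma polyhedral_closed {C : Set (E n)} (hC : IsPolyhedralCone C) : IsClosed C := by
  obtain ⟨s, rfl⟩ := hC
  have : {x : E n | ∀ u ∈ s, ⟪u, x⟫ ≤ 0} = ⋂ u ∈ s, {x : E n | ⟪u, x⟫ ≤ 0} := by
    ext x; simp
  rw [this]
  exact isClosed_biInter fun u _ =>
    isClosed_le (continuous_const.inner continuous_id) continuous_const

private lemma polar_inter' {C D : Set (E n)} (hC : IsPolyhedralCone C) (hD : IsPolyhedralCone D)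
    (hU : IsPolyhedralCone (C ∪ D)) :
    polarDual (C ∩ D) = polarDual C ∪ polarDual D := by
  ext y
  constructor
  · intro hy
    by_contra hmem
    rw [Set.mem_union] at hmem
    push_neg at hmem
    obtain ⟨h1, h2⟩ := hmem
    simp only [polarDual, Set.mem_setOf_eq, not_forall, not_le] at h1 h2
    obtain ⟨a, haC, hya⟩ := h1
    obtain ⟨b, hbD, hyb⟩ := h2
    have hseg : segment ℝ a b ⊆ C ∪ D := by
      have hconv := polyhedral_convex hU
      exact hconv.segment_subset (Or.inl haC) (Or.inr hbD)
    have hpc : IsPreconnected (segment ℝ a b) := by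
      rw [segment_eq_image]
      exact isPreconnected_Icc.image _
        (((continuous_const.sub continuous_id).smul continuous_const).add
          (continuous_id.smul continuous_const)).continuousOn
    obtain ⟨c, hcseg, hcC, hcD⟩ :=
      isPreconnected_closed_iff.mp hpc C D (polyhedral_closed hC) (polyhedral_closed hD)
        hseg ⟨a, left_mem_segment ℝ a b, haC⟩ ⟨b, right_mem_segment ℝ a b, hbD⟩
    have hneg : ⟪y, c⟫ ≤ 0 := hy c ⟨hcC, hcD⟩
    rw [segment_eq_image] at hcseg
    obtain ⟨θ, hθmem, hθab⟩ := hcseg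
    obtain ⟨hθ0, hθ1⟩ := hθmem
    rw [← hθab, inner_add_right, real_inner_smul_right, real_inner_smul_right] at hneg
    nlinarith [mul_nonneg hθ0 hyb.le, mul_nonneg (sub_nonneg.mpr hθ1) hya.le,
      mul_pos hya hyb]
  · rintro (hy | hy) x hx
    exacts [hy x hx.1, hy x hx.2]

private lemma polyhedral_inter' {C D : Set (E n)} (hC : IsPolyhedralCone C)
    (hD : IsPolyhedralCone D) : IsPolyhedralCone (C ∩ D) := by
  obtain ⟨s, rfl⟩ := hC
  obtain ⟨t, rfl⟩ := hD
  refine ⟨s ∪ t, ?_⟩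
  ext x
  simp only [Set.mem_inter_iff, Set.mem_setOf_eq, Finset.mem_union]
  constructor
  · rintro ⟨h1, h2⟩ u (hu | hu)
    exacts [h1 u hu, h2 u hu]
  · intro h
    exact ⟨fun u hu => h u (Or.inl hu), fun u hu => h u (Or.inr hu)⟩

end AuxStmt2

/-- If `φ` is a valuation on convex polyhedral cones, then so is `C ↦ φ(C°)`. -/
theorem stmt2 {n : ℕ} (φ : Set (E n) → ℝ) (hφ : IsConeValuation φ) :
    IsConeValuation (fun C => φ (polarDual C)) := by
  intro C D hC hD hU
  simp only
  have hCD : IsPolyhedralCone (C ∩ D) := polyhedral_inter' hC hD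
  have hpu : polarDual (C ∪ D) = polarDual C ∩ polarDual D := polar_union' C D
  have hpi : polarDual (C ∩ D) = polarDual C ∪ polarDual D := polar_inter' hC hD hU
  have h1 : IsPolyhedralCone (polarDual C) := polar_polyhedral' hC
  have h2 : IsPolyhedralCone (polarDual D) := polar_polyhedral' hD
  have h3 : IsPolyhedralCone (polarDual C ∪ polarDual D) := by
    rw [← hpi]; exact polar_polyhedral' hCD
  have := hφ (polarDual C) (polarDual D) h1 h2 h3
  rw [hpu, hpi]
  linarith
end
end

section
/- Every weakly additive real function on the family of convex polytopes in ℝⁿ is fully additive and admits an additive extension (a valuation) to the family of all polyhedra (finite unions of convex polytopes). -/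
open scoped RealInnerProductSpace
open MeasureTheory

attribute [local instance] Classical.propDecidable

noncomputable section

set_option linter.unusedSectionVars false
set_option linter.unusedVariables false
set_option maxHeartbeats 1000000

namespace Groemer

open Finset

variable {V : Type} [NormedAddCommGroup V] [InnerProductSpace ℝ V] [FiniteDimensional ℝ V]

def HRep (t : Finset (V × ℝ)) : Set V := {x | ∀ p ∈ t, ⟪p.1, x⟫ ≤ p.2}

def Pol (P : Set V) : Prop :=
  ∃ s : Finset V, s.Nonempty ∧ P = convexHull ℝ (s : Set V)

lemma convex_HRep (t : Finset (V × ℝ)) : Convex ℝ (HRep t) := by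
  have : HRep t = ⋂ p ∈ t, {x : V | ⟪p.1, x⟫ ≤ p.2} := by ext x; simp [HRep]
  rw [this]
  exact convex_iInter fun p => convex_iInter fun _ =>
    convex_halfSpace_le (innerSL ℝ p.1).isLinear p.2

lemma isClosed_HRep (t : Finset (V × ℝ)) : IsClosed (HRep t) := by
  have : HRep t = ⋂ p ∈ t, {x : V | ⟪p.1, x⟫ ≤ p.2} := by ext x; simp [HRep]
  rw [this]
  exact isClosed_biInter fun p _ => isClosed_le (innerSL ℝ p.1).continuous continuous_const

lemma Pol.nonempty {P : Set V} (h : Pol P) : P.Nonempty := by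
  obtain ⟨s, hs, rfl⟩ := h
  exact hs.to_set.mono (subset_convexHull ℝ _)

lemma Pol.convex {P : Set V} (h : Pol P) : Convex ℝ P := by
  obtain ⟨s, hs, rfl⟩ := h; exact convex_convexHull ℝ _

lemma Pol.isCompact {P : Set V} (h : Pol P) : IsCompact P := by
  obtain ⟨s, hs, rfl⟩ := h; exact s.finite_toSet.isCompact_convexHull ℝ

/-- Minkowski–Weyl, H-to-V direction. -/
theorem hrep_pol (t : Finset (V × ℝ)) (hne : (HRep t).Nonempty)
    (hbd : Bornology.IsBounded (HRep t)) : Pol (HRep t) := by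
  set K := HRep t with hK
  have hcomp : IsCompact K := Metric.isCompact_iff_isClosed_bounded.2 ⟨isClosed_HRep t, hbd⟩
  have hconv : Convex ℝ K := convex_HRep t
  have hinj : Set.InjOn (fun x => t.filter (fun p => ⟪p.1, x⟫ = p.2)) (K.extremePoints ℝ) := by
    intro x hx y hy hxy
    simp only at hxy
    by_contra hne'
    have hxK : x ∈ K := hx.1
    have hyK : y ∈ K := hy.1
    have hbmem : ∀ p ∈ t, ⟪p.1, x⟫ = p.2 → ⟪p.1, x - y⟫ = 0 := by
      intro p hp hpx
      have hpy : ⟪p.1, y⟫ = p.2 := by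
        have hmem : p ∈ t.filter (fun p => ⟪p.1, x⟫ = p.2) := Finset.mem_filter.2 ⟨hp, hpx⟩
        rw [hxy] at hmem
        exact (Finset.mem_filter.1 hmem).2
      rw [inner_sub_right, hpx, hpy, sub_self]
    have hev : ∀ᶠ ε : ℝ in nhdsWithin 0 (Set.Ioi 0),
        x + ε • (x - y) ∈ K ∧ x - ε • (x - y) ∈ K := by
      have hall : ∀ p ∈ t, ∀ᶠ ε : ℝ in nhdsWithin 0 (Set.Ioi 0),
          ⟪p.1, x + ε • (x - y)⟫ ≤ p.2 ∧ ⟪p.1, x - ε • (x - y)⟫ ≤ p.2 := by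
        intro p hp
        rcases eq_or_lt_of_le (hxK p hp) with heq | hlt
        · refine Filter.Eventually.of_forall (fun ε => ?_)
          have h0 := hbmem p hp heq
          simp [inner_add_right, inner_sub_right, inner_smul_right, h0, heq]
        · have hc1 : Filter.Tendsto (fun ε : ℝ => ⟪p.1, x + ε • (x - y)⟫)
              (nhdsWithin 0 (Set.Ioi 0)) (nhds ⟪p.1, x⟫) := by
            have : Continuous (fun ε : ℝ => ⟪p.1, x + ε • (x - y)⟫) :=
              (innerSL ℝ p.1).continuous.comp
                (continuous_const.add (continuous_id.smul continuous_const))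
            simpa using ((this.tendsto 0).mono_left nhdsWithin_le_nhds)
          have hc2 : Filter.Tendsto (fun ε : ℝ => ⟪p.1, x - ε • (x - y)⟫)
              (nhdsWithin 0 (Set.Ioi 0)) (nhds ⟪p.1, x⟫) := by
            have : Continuous (fun ε : ℝ => ⟪p.1, x - ε • (x - y)⟫) :=
              (innerSL ℝ p.1).continuous.comp
                (continuous_const.sub (continuous_id.smul continuous_const))
            simpa using ((this.tendsto 0).mono_left nhdsWithin_le_nhds)
          exact ((hc1.eventually_lt_const hlt).and (hc2.eventually_lt_const hlt)).mono
            (fun ε h => ⟨le_of_lt h.1, le_of_lt h.2⟩)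
      rw [← Filter.eventually_all_finset] at hall
      exact hall.mono (fun ε h => ⟨fun p hp => (h p hp).1, fun p hp => (h p hp).2⟩)
    obtain ⟨ε, hmem, hε⟩ := (hev.and eventually_mem_nhdsWithin).exists
    have hεpos : (0:ℝ) < ε := hε
    have hseg : x ∈ openSegment ℝ (x + ε • (x - y)) (x - ε • (x - y)) := by
      refine ⟨1/2, 1/2, by norm_num, by norm_num, by norm_num, ?_⟩
      module
    have h1 := hx.2 hmem.1 hmem.2 hseg
    have h2 : ε • (x - y) = 0 := by
      have := h1
      abel_nf at this ⊢
      linear_combination (norm := module) this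
    rcases smul_eq_zero.1 h2 with h | h
    · exact absurd h (ne_of_gt hεpos)
    · exact hne' (by rwa [sub_eq_zero] at h)
  have hfin : (K.extremePoints ℝ).Finite := by
    have himfin : ((fun x => t.filter (fun p => ⟪p.1, x⟫ = p.2)) '' (K.extremePoints ℝ)).Finite :=
      (Set.Finite.subset (t.powerset.finite_toSet) (by
        rintro _ ⟨x, _, rfl⟩
        simp only [Finset.coe_powerset, Set.mem_preimage, Set.mem_powerset_iff,
          Finset.coe_filter]
        intro q hq; exact hq.1))
    exact Set.Finite.of_finite_image himfin hinj
  have hKM := closure_convexHull_extremePoints hcomp hconv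
  have hclosed : IsClosed (convexHull ℝ (K.extremePoints ℝ)) :=
    (hfin.isCompact_convexHull ℝ).isClosed
  have hKeq : K = convexHull ℝ (K.extremePoints ℝ) := hKM.symm.trans hclosed.closure_eq
  have hEne : (K.extremePoints ℝ).Nonempty := hcomp.extremePoints_nonempty hne
  refine ⟨hfin.toFinset, hfin.toFinset_nonempty.2 hEne, ?_⟩
  rw [Set.Finite.coe_toFinset]
  exact hKeq


def opolar (S : Set V) : Set V := {u | ∀ x ∈ S, ⟪u, x⟫ ≤ 1}

lemma zero_mem_opolar (S : Set V) : (0 : V) ∈ opolar S := by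
  intro x hx; simp

lemma opolar_convexHull (s : Set V) : opolar (convexHull ℝ s) = opolar s := by
  apply Set.Subset.antisymm
  · intro u hu x hx; exact hu x (subset_convexHull ℝ s hx)
  · intro u hu x hx
    have hconv : Convex ℝ {y : V | ⟪u, y⟫ ≤ 1} := convex_halfSpace_le (innerSL ℝ u).isLinear 1
    exact convexHull_min hu hconv hx

lemma opolar_finset (s : Finset V) :
    opolar (s : Set V) = HRep (s.image (fun v => (v, (1:ℝ)))) := by
  ext u
  simp only [opolar, HRep, Set.mem_setOf_eq, Finset.mem_image]
  constructor
  · rintro h p ⟨v, hv, rfl⟩; rw [real_inner_comm]; exact h v hv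
  · intro h x hx; rw [real_inner_comm]; exact h (x, 1) ⟨x, hx, rfl⟩

lemma bipolar {S : Set V} (hconv : Convex ℝ S) (hcl : IsClosed S) (h0 : (0:V) ∈ S) :
    opolar (opolar S) = S := by
  apply Set.Subset.antisymm
  · intro x hx
    by_contra hxS
    obtain ⟨f, u, hfa, hfx⟩ := geometric_hahn_banach_closed_point hconv hcl hxS
    have hu0 : 0 < u := by have := hfa 0 h0; simpa using this
    set w := (InnerProductSpace.toDual ℝ V).symm f with hw
    have hwy : ∀ y, ⟪w, y⟫ = f y := fun y => InnerProductSpace.toDual_symm_apply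
    have hmem : u⁻¹ • w ∈ opolar S := by
      intro y hy
      rw [real_inner_smul_left, hwy]
      have := hfa y hy
      rw [inv_mul_le_iff₀ hu0]
      linarith
    have := hx _ hmem
    rw [real_inner_comm, real_inner_smul_left, hwy] at this
    rw [inv_mul_le_iff₀ hu0] at this
    linarith
  · intro x hx u hu
    have := hu x hx
    rwa [real_inner_comm]

lemma pol_hrep_of_interior (P : Set V) (hP : Pol P) (h0 : (0:V) ∈ interior P) :
    ∃ t : Finset (V × ℝ), P = HRep t := by
  have hPc : IsCompact P := hP.isCompact
  have hPcv : Convex ℝ P := hP.convex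
  obtain ⟨s, hsne, hPs⟩ := hP
  obtain ⟨r, hr, hball⟩ := Metric.mem_nhds_iff.1 (mem_interior_iff_mem_nhds.1 h0)
  have hQrep : opolar P = HRep (s.image (fun v => (v, (1:ℝ)))) := by
    rw [hPs, opolar_convexHull, opolar_finset]
  have hQbd : Bornology.IsBounded (opolar P) := by
    apply (Metric.isBounded_closedBall (x := (0:V)) (r := 2/r)).subset
    intro u hu
    rcases eq_or_ne u 0 with rfl | hu0
    · simp [Metric.mem_closedBall]; positivity
    · have hv : ((r/2) * ‖u‖⁻¹) • u ∈ P := by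
        apply hball
        rw [Metric.mem_ball, dist_zero_right, norm_smul]
        have : ‖u‖ ≠ 0 := norm_ne_zero_iff.2 hu0
        rw [Real.norm_eq_abs, abs_of_pos (by positivity)]
        rw [mul_assoc, inv_mul_cancel₀ this, mul_one]
        linarith
      have hle := hu _ hv
      rw [real_inner_smul_right, real_inner_self_eq_norm_sq] at hle
      have hnn : ‖u‖ ≠ 0 := norm_ne_zero_iff.2 hu0
      rw [Metric.mem_closedBall, dist_zero_right]
      have h2 : (r/2) * ‖u‖ ≤ 1 := by
        have : (r/2) * ‖u‖⁻¹ * ‖u‖^2 = (r/2) * ‖u‖ := by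
          field_simp
        linarith [this ▸ hle]
      rw [le_div_iff₀ hr]
      nlinarith [norm_nonneg u, hr]
  have hQne : (opolar P).Nonempty := ⟨0, zero_mem_opolar P⟩
  have hQpol : Pol (opolar P) := by
    rw [hQrep] at hQne hQbd ⊢
    exact hrep_pol _ hQne hQbd
  obtain ⟨th, hthne, hth⟩ := hQpol
  refine ⟨th.image (fun v => (v, (1:ℝ))), ?_⟩
  have hPcl : IsClosed P := hPc.isClosed
  have h0P : (0:V) ∈ P := interior_subset h0
  calc P = opolar (opolar P) := (bipolar hPcv hPcl h0P).symm
    _ = opolar (convexHull ℝ (th : Set V)) := by rw [hth]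
    _ = HRep (th.image (fun v => (v, (1:ℝ)))) := by rw [opolar_convexHull, opolar_finset]


lemma pol_hrep_translate (P : Set V) (x₀ : V)
    (h : ∃ t : Finset (V × ℝ), (fun x => x - x₀) '' P = HRep t) :
    ∃ t : Finset (V × ℝ), P = HRep t := by
  obtain ⟨t, ht⟩ := h
  refine ⟨t.image (fun p => (p.1, p.2 + ⟪p.1, x₀⟫)), ?_⟩
  ext x
  have hx : x ∈ P ↔ x - x₀ ∈ (fun x => x - x₀) '' P := by
    constructor
    · intro h; exact ⟨x, h, rfl⟩
    · rintro ⟨y, hy, hyx⟩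
      have : y = x := by
        have := sub_left_injective (G := V) (by exact hyx)
        exact this
      rwa [← this]
  rw [hx, ht]
  simp only [HRep, Set.mem_setOf_eq, Finset.mem_image]
  constructor
  · rintro h p ⟨q, hq, rfl⟩
    have := h q hq
    rw [inner_sub_right] at this
    simp only
    linarith
  · intro h p hp
    have := h (p.1, p.2 + ⟪p.1, x₀⟫) ⟨p, hp, rfl⟩
    simp only at this
    rw [inner_sub_right]
    linarith

/-- Minkowski–Weyl, V-to-H direction, by induction on dimension. -/
theorem pol_hrep_aux : ∀ (k : ℕ) (V : Type) [NormedAddCommGroup V] [InnerProductSpace ℝ V]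
    [FiniteDimensional ℝ V], Module.finrank ℝ V ≤ k →
    ∀ P : Set V, Pol P → ∃ t : Finset (V × ℝ), P = HRep t := by
  intro k
  induction k with
  | zero =>
    intro V _ _ _ hrk P hP
    have : Subsingleton V := by
      rw [← Module.finrank_zero_iff (R := ℝ)]
      omega
    refine ⟨∅, ?_⟩
    have hne := hP.nonempty
    have : P = Set.univ := by
      apply Set.eq_univ_of_forall
      intro x
      obtain ⟨y, hy⟩ := hne
      rwa [Subsingleton.elim x y]
    rw [this]
    ext x; simp [HRep]
  | succ k IH =>
    intro V _ _ _ hrk P hP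
    obtain ⟨s, hsne, hPs⟩ := hP
    rcases Set.eq_empty_or_nonempty (interior P) with hint | hint
    · -- P is not full-dimensional
      have haff : ¬ affineSpan ℝ (s : Set V) = ⊤ := by
        rw [← interior_convexHull_nonempty_iff_affineSpan_eq_top]
        rw [← hPs, hint]
        simp
      obtain ⟨x₀, hx₀s⟩ := hsne
      have hx₀span : x₀ ∈ affineSpan ℝ (s : Set V) := subset_affineSpan ℝ _ hx₀s
      have hdir : (affineSpan ℝ (s : Set V)).direction ≠ ⊤ := by
        intro h
        exact haff ((AffineSubspace.direction_eq_top_iff_of_nonempty ⟨x₀, hx₀span⟩).1 h)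
      have horth : (affineSpan ℝ (s : Set V)).directionᗮ ≠ ⊥ := by
        intro h
        exact hdir (Submodule.orthogonal_eq_bot_iff.1 h)
      obtain ⟨u, huD, hu0⟩ := Submodule.exists_mem_ne_zero_of_ne_bot horth
      have haffc : ∀ y ∈ affineSpan ℝ (s : Set V), ⟪u, y⟫ = ⟪u, x₀⟫ := by
        intro y hy
        have hmem : y - x₀ ∈ (affineSpan ℝ (s : Set V)).direction := by
          have := AffineSubspace.vsub_mem_direction hy hx₀span
          simpa using this
        have h0 : ⟪y - x₀, u⟫ = 0 :=
          (Submodule.mem_orthogonal (affineSpan ℝ (s : Set V)).direction u).1 huD _ hmem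
        rw [real_inner_comm, inner_sub_right] at h0
        linarith
      have hPspan : P ⊆ (affineSpan ℝ (s : Set V) : Set V) := by
        rw [hPs]
        exact convexHull_min (subset_affineSpan ℝ _) (AffineSubspace.convex _)
      have hrkW : Module.finrank ℝ (ℝ ∙ u)ᗮ ≤ k := by
        have h1 : Module.finrank ℝ (ℝ ∙ u) = 1 := finrank_span_singleton hu0
        have h2 := Submodule.finrank_add_finrank_orthogonal (K := ℝ ∙ u) (E := V)
        omega
      have hmemW : ∀ x ∈ P, x - x₀ ∈ (ℝ ∙ u)ᗮ := by
        intro x hx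
        rw [Submodule.mem_orthogonal_singleton_iff_inner_right, inner_sub_right,
          haffc x (hPspan hx)]
        ring
      set g : V → (ℝ ∙ u)ᗮ :=
        fun x => if h : x - x₀ ∈ (ℝ ∙ u)ᗮ then (⟨x - x₀, h⟩ : (ℝ ∙ u)ᗮ) else 0 with hg
      have hgval : ∀ x ∈ s, ((g x : V)) = x - x₀ := by
        intro x hx
        have hxP : x ∈ P := hPs ▸ subset_convexHull ℝ _ hx
        simp only [hg, dif_pos (hmemW x hxP)]
      set sh : Finset (ℝ ∙ u)ᗮ := s.image g with hsh
      have hcoe : ((↑) : (ℝ ∙ u)ᗮ → V) '' (sh : Set (ℝ ∙ u)ᗮ)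
          = (fun x => x - x₀) '' (s : Set V) := by
        ext v
        simp only [hsh, Finset.coe_image, Set.mem_image]
        constructor
        · rintro ⟨w, ⟨x, hx, rfl⟩, rfl⟩
          exact ⟨x, hx, (hgval x hx).symm⟩
        · rintro ⟨x, hx, rfl⟩
          exact ⟨g x, ⟨x, hx, rfl⟩, hgval x hx⟩
      have hshne : sh.Nonempty := ⟨g x₀, Finset.mem_image_of_mem g hx₀s⟩
      obtain ⟨th, hth⟩ := IH (ℝ ∙ u)ᗮ hrkW (convexHull ℝ (sh : Set (ℝ ∙ u)ᗮ)) ⟨sh, hshne, rfl⟩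
      have hhullcoe : ((↑) : (ℝ ∙ u)ᗮ → V) '' (convexHull ℝ (sh : Set (ℝ ∙ u)ᗮ))
          = convexHull ℝ ((fun x => x - x₀) '' (s : Set V)) := by
        rw [← hcoe]
        have := (ℝ ∙ u)ᗮ.subtype.image_convexHull (sh : Set (ℝ ∙ u)ᗮ)
        simpa using this
      have hPtrans : (fun x => x - x₀) '' P
          = ((↑) : (ℝ ∙ u)ᗮ → V) '' (convexHull ℝ (sh : Set (ℝ ∙ u)ᗮ)) := by
        rw [hhullcoe, hPs]
        have hfun : (fun x : V => x - x₀) = fun x => (-x₀) +ᵥ x := by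
          funext x; simp [sub_eq_neg_add]
        rw [hfun]
        exact (AffineEquiv.constVAdd ℝ V (-x₀)).toAffineMap.image_convexHull _
      apply pol_hrep_translate P x₀
      refine ⟨({(u, 0), (-u, 0)} : Finset (V × ℝ)) ∪
        th.image (fun q => (((q.1 : (ℝ ∙ u)ᗮ) : V), q.2)), ?_⟩
      rw [hPtrans]
      ext v
      simp only [HRep, Set.mem_setOf_eq, Finset.mem_union, Finset.mem_image, Set.mem_image,
        Finset.mem_insert, Finset.mem_singleton]
      constructor
      · rintro ⟨w, hw, rfl⟩
        intro p hp
        have hw0 : ⟪u, (w : V)⟫ = 0 := by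
          rw [← Submodule.mem_orthogonal_singleton_iff_inner_right]
          exact w.2
        rcases hp with (rfl | rfl) | ⟨q, hq, rfl⟩
        · simp [hw0]
        · simp [inner_neg_left, hw0]
        · have hwh : w ∈ HRep th := hth ▸ hw
          have := hwh q hq
          rw [Submodule.coe_inner] at this
          exact this
      · intro hv
        have h1 := hv (u, 0) (Or.inl (Or.inl rfl))
        have h2 := hv (-u, 0) (Or.inl (Or.inr rfl))
        simp only [inner_neg_left] at h1 h2
        have hv0 : ⟪u, v⟫ = 0 := le_antisymm h1 (by linarith)
        have hvW : v ∈ (ℝ ∙ u)ᗮ :=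
          Submodule.mem_orthogonal_singleton_iff_inner_right.2 hv0
        have hwmem : (⟨v, hvW⟩ : (ℝ ∙ u)ᗮ) ∈ HRep th := by
          intro q hq
          rw [Submodule.coe_inner]
          exact hv ((q.1 : V), q.2) (Or.inr ⟨q, hq, rfl⟩)
        rw [← hth] at hwmem
        exact ⟨⟨v, hvW⟩, hwmem, rfl⟩
    · -- P is full-dimensional
      obtain ⟨x₁, hx₁⟩ := hint
      apply pol_hrep_translate P x₁
      have himg : (fun x => x - x₁) '' P = convexHull ℝ ((fun x => x - x₁) '' (s : Set V)) := by
        rw [hPs]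
        have hfun : (fun x : V => x - x₁) = fun x => (-x₁) +ᵥ x := by
          funext x; simp [sub_eq_neg_add]
        rw [hfun]
        exact (AffineEquiv.constVAdd ℝ V (-x₁)).toAffineMap.image_convexHull _
      have hpol : Pol ((fun x => x - x₁) '' P) :=
        ⟨s.image (fun x => x - x₁), hsne.image _, by rw [himg, Finset.coe_image]⟩
      apply pol_hrep_of_interior _ hpol
      have : (fun x => x - x₁) '' interior P = interior ((fun x => x - x₁) '' P) :=
        (Homeomorph.subRight x₁).image_interior P
      rw [← this]
      exact ⟨x₁, hx₁, by simp⟩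


theorem pol_hrep {P : Set V} (h : Pol P) : ∃ t : Finset (V × ℝ), P = HRep t :=
  pol_hrep_aux (Module.finrank ℝ V) V le_rfl P h

def hsNeg (p : V × ℝ) : Set V := {x | ⟪p.1, x⟫ ≤ p.2}
def hsPos (p : V × ℝ) : Set V := {x | p.2 ≤ ⟪p.1, x⟫}
def hsZer (p : V × ℝ) : Set V := {x | ⟪p.1, x⟫ = p.2}

def side (p : V × ℝ) : Fin 3 → Set V := ![hsZer p, hsNeg p, hsPos p]

lemma side_zero (p : V × ℝ) : side p 0 = hsZer p := rfl
lemma side_one (p : V × ℝ) : side p 1 = hsNeg p := rfl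
lemma side_two (p : V × ℝ) : side p 2 = hsPos p := rfl

lemma HRep_inter (t₁ t₂ : Finset (V × ℝ)) : HRep t₁ ∩ HRep t₂ = HRep (t₁ ∪ t₂) := by
  ext x
  simp only [HRep, Set.mem_inter_iff, Set.mem_setOf_eq, Finset.mem_union]
  constructor
  · rintro ⟨h1, h2⟩ p hp; rcases hp with hp | hp; exacts [h1 p hp, h2 p hp]
  · intro h; exact ⟨fun p hp => h p (Or.inl hp), fun p hp => h p (Or.inr hp)⟩

lemma hsZer_hrep (p : V × ℝ) : hsZer p = HRep {p, (-p.1, -p.2)} := by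
  ext x
  constructor
  · intro h
    intro q hq
    rcases Finset.mem_insert.1 hq with rfl | hq
    · exact le_of_eq h
    · rw [Finset.mem_singleton.1 hq]
      simp only [inner_neg_left]
      have : ⟪p.1, x⟫ = p.2 := h
      linarith
  · intro h
    have h1 := h p (Finset.mem_insert_self _ _)
    have h2 := h (-p.1, -p.2) (Finset.mem_insert.2 (Or.inr (Finset.mem_singleton_self _)))
    simp only [inner_neg_left] at h2
    show ⟪p.1, x⟫ = p.2
    linarith

lemma hsNeg_hrep (p : V × ℝ) : hsNeg p = HRep {p} := by
  ext x
  constructor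
  · intro h q hq
    rw [Finset.mem_singleton.1 hq]
    exact h
  · intro h
    exact h p (Finset.mem_singleton_self _)

lemma hsPos_hrep (p : V × ℝ) : hsPos p = HRep {(-p.1, -p.2)} := by
  ext x
  constructor
  · intro h q hq
    rw [Finset.mem_singleton.1 hq]
    simp only [inner_neg_left]
    have : p.2 ≤ ⟪p.1, x⟫ := h
    linarith
  · intro h
    have := h (-p.1, -p.2) (Finset.mem_singleton_self _)
    simp only [inner_neg_left] at this
    show p.2 ≤ ⟪p.1, x⟫
    linarith

lemma side_eq_HRep (p : V × ℝ) (i : Fin 3) : ∃ e : Finset (V × ℝ), side p i = HRep e := by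
  fin_cases i
  · exact ⟨_, hsZer_hrep p⟩
  · exact ⟨_, hsNeg_hrep p⟩
  · exact ⟨_, hsPos_hrep p⟩

/-- "Polytope or empty". -/
def PoE (S : Set V) : Prop := Pol S ∨ S = ∅

lemma PoE_hrep_bounded {t : Finset (V × ℝ)} (hbd : Bornology.IsBounded (HRep t)) :
    PoE (HRep t) := by
  rcases Set.eq_empty_or_nonempty (HRep t) with h | h
  · exact Or.inr h
  · exact Or.inl (hrep_pol t h hbd)

lemma PoE.inter {A B : Set V} (hA : PoE A) (hB : PoE B) : PoE (A ∩ B) := by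
  rcases hA with hA | rfl
  · rcases hB with hB | rfl
    · obtain ⟨t1, rfl⟩ := pol_hrep hA
      obtain ⟨t2, rfl⟩ := pol_hrep hB
      rw [HRep_inter]
      exact PoE_hrep_bounded ((hA.isCompact.isBounded).subset
        (by rw [← HRep_inter]; exact Set.inter_subset_left))
    · exact Or.inr (Set.inter_empty A)
  · exact Or.inr (Set.empty_inter B)

lemma PoE.inter_side {A : Set V} (hA : PoE A) (p : V × ℝ) (i : Fin 3) : PoE (A ∩ side p i) := by
  rcases hA with hA | rfl
  · obtain ⟨t1, rfl⟩ := pol_hrep hA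
    obtain ⟨e, he⟩ := side_eq_HRep p i
    rw [he, HRep_inter]
    exact PoE_hrep_bounded ((hA.isCompact.isBounded).subset
      (by rw [← HRep_inter]; exact Set.inter_subset_left))
  · exact Or.inr (Set.empty_inter _)

/-- indicator function -/
def ind (S : Set V) (x : V) : ℝ := if x ∈ S then 1 else 0

lemma ind_empty (x : V) : ind (∅ : Set V) x = 0 := by simp [ind]

lemma ind_side_split (S : Set V) (p : V × ℝ) (x : V) :
    ind (S ∩ side p 1) x + ind (S ∩ side p 2) x - ind (S ∩ side p 0) x = ind S x := by
  simp only [ind, side_zero, side_one, side_two, Set.mem_inter_iff]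
  by_cases hx : x ∈ S
  · simp only [hx, true_and, if_pos]
    rcases lt_trichotomy ⟪p.1, x⟫ p.2 with h | h | h
    · have h1 : x ∈ hsNeg p := le_of_lt h
      have h2 : x ∉ hsPos p := not_le.2 h
      have h3 : x ∉ hsZer p := ne_of_lt h
      simp [h1, h2, h3]
    · have h1 : x ∈ hsNeg p := le_of_eq h
      have h2 : x ∈ hsPos p := ge_of_eq h
      have h3 : x ∈ hsZer p := h
      simp [h1, h2, h3]
    · have h1 : x ∉ hsNeg p := not_le.2 h
      have h2 : x ∈ hsPos p := le_of_lt h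
      have h3 : x ∉ hsZer p := ne_of_gt h
      simp [h1, h2, h3]
  · simp [hx]


def RegionF (H : Finset (V × ℝ)) (τ : V × ℝ → Fin 3) : Set V := ⋂ p ∈ H, side p (τ p)

lemma mem_RegionF {H : Finset (V × ℝ)} {τ : V × ℝ → Fin 3} {x : V} :
    x ∈ RegionF H τ ↔ ∀ p ∈ H, x ∈ side p (τ p) := by simp [RegionF]

lemma convex_side (p : V × ℝ) (i : Fin 3) : Convex ℝ (side p i) := by
  fin_cases i
  · exact convex_hyperplane (innerSL ℝ p.1).isLinear p.2
  · exact convex_halfSpace_le (innerSL ℝ p.1).isLinear p.2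
  · exact convex_halfSpace_ge (innerSL ℝ p.1).isLinear p.2

lemma convex_RegionF (H : Finset (V × ℝ)) (τ : V × ℝ → Fin 3) : Convex ℝ (RegionF H τ) :=
  convex_iInter fun p => convex_iInter fun _ => convex_side p (τ p)

lemma hsZer_subset_side (p : V × ℝ) (i : Fin 3) : hsZer p ⊆ side p i := by
  fin_cases i
  · exact subset_rfl
  · intro x hx; exact le_of_eq hx
  · intro x hx; exact ge_of_eq hx

lemma neg_pos_subset_zer {S : Set V} {p : V × ℝ} (h1 : S ⊆ hsNeg p) (h2 : S ⊆ hsPos p) :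
    S ⊆ hsZer p := fun x hx => le_antisymm (h1 hx) (h2 hx)

/-- canonical sign vector of a set -/
def tauHat (S : Set V) (p : V × ℝ) : Fin 3 :=
  if S ⊆ hsZer p then 0 else if S ⊆ hsNeg p then 1 else 2

lemma tauHat_eq_zero_iff {S : Set V} {p : V × ℝ} : tauHat S p = 0 ↔ S ⊆ hsZer p := by
  unfold tauHat
  by_cases h0 : S ⊆ hsZer p
  · simp [h0]
  · by_cases h1 : S ⊆ hsNeg p <;> simp [h0, h1]

lemma tauHat_forced {S : Set V} {p : V × ℝ} {i : Fin 3} (h : S ⊆ side p i) :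
    S ⊆ side p (tauHat S p) ∧ side p (tauHat S p) ⊆ side p i := by
  unfold tauHat
  by_cases h0 : S ⊆ hsZer p
  · rw [if_pos h0]
    exact ⟨h0, hsZer_subset_side p i⟩
  · rw [if_neg h0]
    by_cases h1 : S ⊆ hsNeg p
    · rw [if_pos h1]
      have hi : i = 1 := by
        fin_cases i
        · exact absurd h h0
        · rfl
        · exact absurd (neg_pos_subset_zer h1 h) h0
      rw [hi]
      exact ⟨h1, subset_rfl⟩
    · have hi : i = 2 := by
        fin_cases i
        · exact absurd h h0
        · exact absurd h h1
        · rfl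
      rw [if_neg h1]
      subst hi
      exact ⟨h, subset_rfl⟩

lemma canon {S : Set V} {H : Finset (V × ℝ)} {τ : V × ℝ → Fin 3} (hS : S = RegionF H τ) :
    S = RegionF H (tauHat S) := by
  have hsub : ∀ p ∈ H, S ⊆ side p (τ p) := by
    intro p hp
    rw [hS]
    intro x hx
    exact mem_RegionF.1 hx p hp
  apply Set.Subset.antisymm
  · intro x hx
    rw [mem_RegionF]
    intro p hp
    exact (tauHat_forced (hsub p hp)).1 hx
  · intro x hx
    rw [hS, mem_RegionF]
    intro p hp
    exact (tauHat_forced (hsub p hp)).2 (mem_RegionF.1 hx p hp)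

lemma avoid {S : Set V} (hconv : Convex ℝ S) (hne : S.Nonempty) :
    ∀ F : Finset (V × ℝ), (∀ p ∈ F, ¬ S ⊆ hsZer p) → ∃ x ∈ S, ∀ p ∈ F, x ∉ hsZer p := by
  intro F
  induction F using Finset.induction_on with
  | empty =>
    intro _
    obtain ⟨x, hx⟩ := hne
    exact ⟨x, hx, fun p hp => absurd hp (Finset.notMem_empty p)⟩
  | @insert p F hpF IH =>
    intro hF
    obtain ⟨x, hxS, hxF⟩ := IH (fun q hq => hF q (Finset.mem_insert_of_mem hq))
    by_cases hxp : x ∉ hsZer p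
    · exact ⟨x, hxS, fun q hq => by
        rcases Finset.mem_insert.1 hq with rfl | hq
        exacts [hxp, hxF q hq]⟩
    push_neg at hxp
    obtain ⟨y, hyS, hyp⟩ := Set.not_subset.1 (hF p (Finset.mem_insert_self p F))
    have hev : ∀ᶠ t : ℝ in nhdsWithin 0 (Set.Ioi 0),
        (∀ q ∈ F, (1 - t) • x + t • y ∉ hsZer q) ∧ t ≤ 1 := by
      apply Filter.Eventually.and
      · rw [Filter.eventually_all_finset]
        intro q hq
        have hcont : Filter.Tendsto (fun t : ℝ => ⟪q.1, (1 - t) • x + t • y⟫)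
            (nhdsWithin 0 (Set.Ioi 0)) (nhds ⟪q.1, x⟫) := by
          have hc : Continuous (fun t : ℝ => ⟪q.1, (1 - t) • x + t • y⟫) :=
            (innerSL ℝ q.1).continuous.comp
              (((continuous_const.sub continuous_id).smul continuous_const).add
                (continuous_id.smul continuous_const))
          have := (hc.tendsto 0).mono_left (nhdsWithin_le_nhds (s := Set.Ioi (0:ℝ)))
          simpa using this
        have hne' : ⟪q.1, x⟫ ≠ q.2 := hxF q hq
        exact (hcont.eventually_ne hne')
      · apply Filter.Eventually.filter_mono nhdsWithin_le_nhds
        exact isOpen_Iio.eventually_mem (show (0:ℝ) ∈ Set.Iio 1 by norm_num) |>.mono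
          (fun t ht => le_of_lt ht)
    obtain ⟨t, ⟨hqF, ht1⟩, ht0⟩ := (hev.and eventually_mem_nhdsWithin).exists
    have ht0' : (0:ℝ) < t := ht0
    set z := (1 - t) • x + t • y with hz
    have hzS : z ∈ S := hconv hxS hyS (by linarith) (le_of_lt ht0') (by ring)
    refine ⟨z, hzS, fun q hq => ?_⟩
    rcases Finset.mem_insert.1 hq with rfl | hq
    · intro hzq
      have h1 : ⟪q.1, z⟫ = q.2 := hzq
      have hx1 : ⟪q.1, x⟫ = q.2 := hxp
      have hy1 : ⟪q.1, y⟫ ≠ q.2 := hyp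
      rw [hz, inner_add_right, real_inner_smul_right, real_inner_smul_right, hx1] at h1
      apply hy1
      have hcalc : t * ⟪q.1, y⟫ = t * q.2 := by nlinarith [h1]
      exact mul_left_cancel₀ (ne_of_gt ht0') hcalc
    · exact hqF q hq

lemma exact_forced {S S' : Set V} {H : Finset (V × ℝ)}
    (hS : S = RegionF H (tauHat S)) (hS' : S' = RegionF H (tauHat S'))
    {x : V} (hxS : x ∈ S) (hex : ∀ p ∈ H, tauHat S p ≠ 0 → x ∉ hsZer p) (hxS' : x ∈ S') :
    ∀ p ∈ H, (tauHat S' p = 0 → tauHat S p = 0) ∧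
      (tauHat S p ≠ 0 → tauHat S' p = tauHat S p) := by
  intro p hp
  have hxside : x ∈ side p (tauHat S p) := mem_RegionF.1 (hS ▸ hxS) p hp
  have hxside' : x ∈ side p (tauHat S' p) := mem_RegionF.1 (hS' ▸ hxS') p hp
  constructor
  · intro h0
    by_contra hne0
    apply hex p hp hne0
    rw [h0] at hxside'
    exact hxside'
  · intro hne0
    have hxz : x ∉ hsZer p := hex p hp hne0
    have h3 : ∀ i : Fin 3, x ∈ side p i → i ≠ 0 → (x ∈ hsNeg p ∧ ¬ x ∈ hsPos p) →
        i = 1 := by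
      intro i hxi hi0 ⟨hn, hpp⟩
      fin_cases i
      · exact absurd rfl hi0
      · rfl
      · exact absurd hxi hpp
    have h3' : ∀ i : Fin 3, x ∈ side p i → i ≠ 0 → (x ∈ hsPos p ∧ ¬ x ∈ hsNeg p) →
        i = 2 := by
      intro i hxi hi0 ⟨hn, hpp⟩
      fin_cases i
      · exact absurd rfl hi0
      · exact absurd hxi hpp
      · rfl
    have hne0' : tauHat S' p ≠ 0 := by
      intro h0
      rw [h0] at hxside'
      exact hxz hxside'
    rcases lt_trichotomy ⟪p.1, x⟫ p.2 with hlt | heq | hgt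
    · have hmem : x ∈ hsNeg p ∧ ¬ x ∈ hsPos p := ⟨le_of_lt hlt, not_le.2 hlt⟩
      rw [h3 _ hxside' hne0' hmem, h3 _ hxside hne0 hmem]
    · exact absurd heq hxz
    · have hmem : x ∈ hsPos p ∧ ¬ x ∈ hsNeg p := ⟨le_of_lt hgt, not_le.2 hgt⟩
      rw [h3' _ hxside' hne0' hmem, h3' _ hxside hne0 hmem]



lemma ind_lemma (φ : Set V → ℝ) (hempty : φ ∅ = 0) (H : Finset (V × ℝ))
    {ι : Type} (J : Finset ι) (β : ι → ℝ) (Q : ι → Set V)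
    (hrep : ∀ j ∈ J, ∃ τ : V × ℝ → Fin 3, Q j = RegionF H τ)
    (hzero : ∀ x, ∑ j ∈ J, β j * ind (Q j) x = 0) :
    ∑ j ∈ J, β j * φ (Q j) = 0 := by
  classical
  set g : Set V → ℝ := fun S => ∑ j ∈ J.filter (fun j => Q j = S), β j with hg
  set 𝒮 : Finset (Set V) := J.image Q with hSdef
  have hgroup : ∀ f : Set V → ℝ, ∑ j ∈ J, β j * f (Q j) = ∑ S ∈ 𝒮, g S * f S := by
    intro f
    rw [← Finset.sum_fiberwise_of_maps_to (fun j hj => Finset.mem_image_of_mem Q hj)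
      (fun j => β j * f (Q j))]
    apply Finset.sum_congr rfl
    intro S hSmem
    rw [hg]
    simp only
    rw [Finset.sum_mul]
    apply Finset.sum_congr rfl
    intro j hj
    rw [(Finset.mem_filter.1 hj).2]
  have hcanon : ∀ S ∈ 𝒮, S = RegionF H (tauHat S) := by
    intro S hSm
    obtain ⟨j, hj, rfl⟩ := Finset.mem_image.1 hSm
    obtain ⟨τ, hτ⟩ := hrep j hj
    exact canon hτ
  have hzero' : ∀ x, ∑ S ∈ 𝒮, g S * ind S x = 0 :=
    fun x => (hgroup (fun S => ind S x)).symm.trans (hzero x)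
  have main : ∀ k : ℕ, ∀ S ∈ 𝒮, S.Nonempty →
      (H.filter (fun p => tauHat S p = 0)).card = k → g S = 0 := by
    intro k
    induction k using Nat.strong_induction_on with
    | _ k IH =>
      intro S hSm hne hk
      have hSconv : Convex ℝ S := by
        rw [hcanon S hSm]
        exact convex_RegionF H (tauHat S)
      obtain ⟨x, hxS, hex⟩ := avoid hSconv hne
        (H.filter (fun p => ¬ tauHat S p = 0)) (fun p hp => by
          have h2 := (Finset.mem_filter.1 hp).2
          intro hsub
          exact h2 (tauHat_eq_zero_iff.2 hsub))
      have hex' : ∀ p ∈ H, tauHat S p ≠ 0 → x ∉ hsZer p := by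
        intro p hp hne0
        exact hex p (Finset.mem_filter.2 ⟨hp, hne0⟩)
      have hsingle : ∑ S' ∈ 𝒮, g S' * ind S' x = g S * ind S x := by
        apply Finset.sum_eq_single S
        · intro S' hS'm hS'ne
          by_cases hxS' : x ∈ S'
          · have hforced := exact_forced (hcanon S hSm) (hcanon S' hS'm) hxS hex' hxS'
            have hsub : (H.filter (fun p => tauHat S' p = 0))
                ⊆ H.filter (fun p => tauHat S p = 0) := by
              intro p hp
              obtain ⟨hpH, hp0⟩ := Finset.mem_filter.1 hp
              exact Finset.mem_filter.2 ⟨hpH, (hforced p hpH).1 hp0⟩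
            have hne' : ¬ (H.filter (fun p => tauHat S' p = 0))
                = H.filter (fun p => tauHat S p = 0) := by
              intro heq
              apply hS'ne
              have htau : ∀ p ∈ H, tauHat S' p = tauHat S p := by
                intro p hp
                by_cases h0' : tauHat S p = 0
                · have hmem2 : p ∈ H.filter (fun p => tauHat S p = 0) :=
                    Finset.mem_filter.2 ⟨hp, h0'⟩
                  rw [← heq] at hmem2
                  rw [(Finset.mem_filter.1 hmem2).2, h0']
                · exact (hforced p hp).2 h0'
              rw [hcanon S' hS'm, hcanon S hSm]
              unfold RegionF
              exact Set.iInter₂_congr (fun p hp => by rw [htau p hp])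
            have hlt : (H.filter (fun p => tauHat S' p = 0)).card < k := by
              rw [← hk]
              exact Finset.card_lt_card (lt_of_le_of_ne hsub hne')
            rw [IH _ hlt S' hS'm ⟨x, hxS'⟩ rfl, zero_mul]
          · rw [ind, if_neg hxS', mul_zero]
        · intro hSm'
          exact absurd hSm hSm'
      have h0 := (hsingle.symm.trans (hzero' x))
      rw [ind, if_pos hxS, mul_one] at h0
      exact h0
  rw [hgroup φ]
  apply Finset.sum_eq_zero
  intro S hSm
  rcases Set.eq_empty_or_nonempty S with rfl | hne
  · rw [hempty, mul_zero]
  · rw [main _ S hSm hne rfl, zero_mul]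



lemma side_inter_side (p : V × ℝ) (a b : Fin 3) :
    side p a ∩ side p b = side p (if a = b then a else 0) := by
  have hz := hsZer_subset_side p
  have hnp : side p 1 ∩ side p 2 = side p 0 := by
    ext x
    constructor
    · rintro ⟨h1, h2⟩
      have h1' : ⟪p.1, x⟫ ≤ p.2 := h1
      have h2' : p.2 ≤ ⟪p.1, x⟫ := h2
      show ⟪p.1, x⟫ = p.2
      linarith
    · intro h
      have h' : ⟪p.1, x⟫ = p.2 := h
      exact ⟨le_of_eq h', ge_of_eq h'⟩
  fin_cases a <;> fin_cases b
  · rw [if_pos rfl]; exact Set.inter_self _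
  · rw [if_neg (by decide)]; exact Set.inter_eq_self_of_subset_left (hz 1)
  · rw [if_neg (by decide)]; exact Set.inter_eq_self_of_subset_left (hz 2)
  · rw [if_neg (by decide)]; exact Set.inter_eq_self_of_subset_right (hz 1)
  · rw [if_pos rfl]; exact Set.inter_self _
  · rw [if_neg (by decide)]; exact hnp
  · rw [if_neg (by decide)]; exact Set.inter_eq_self_of_subset_right (hz 2)
  · rw [if_neg (by decide)]; rw [Set.inter_comm]; exact hnp
  · rw [if_pos rfl]; exact Set.inter_self _

section Phi

variable (φ : Set V → ℝ)

/-- The weak additivity hypothesis, in halfspace language. -/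
def Weak : Prop :=
  ∀ P : Set V, Pol P → ∀ (u : V) (c : ℝ), u ≠ 0 → (P ∩ {x | ⟪u, x⟫ = c}).Nonempty →
    φ P = φ (P ∩ {x | c ≤ ⟪u, x⟫}) + φ (P ∩ {x | ⟪u, x⟫ ≤ c}) - φ (P ∩ {x | ⟪u, x⟫ = c})

lemma phi_side_split (hempty : φ ∅ = 0) (hweak : Weak φ) {P : Set V} (hP : PoE P)
    (p : V × ℝ) :
    φ P = φ (P ∩ side p 1) + φ (P ∩ side p 2) - φ (P ∩ side p 0) := by
  rcases hP with hP | rfl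
  · rcases eq_or_ne p.1 0 with h0 | h0
    · -- degenerate normal vector
      have hz : ∀ x : V, ⟪p.1, x⟫ = 0 := by intro x; rw [h0]; exact inner_zero_left x
      rcases lt_trichotomy p.2 0 with hc | hc | hc
      · have h1 : P ∩ side p 1 = ∅ := by
          ext x; simp only [side_one, hsNeg, Set.mem_inter_iff, Set.mem_setOf_eq, hz]
          simp only [Set.mem_empty_iff_false, iff_false]
          rintro ⟨-, hle⟩; linarith
        have h2 : P ∩ side p 2 = P := by
          ext x; simp only [side_two, hsPos, Set.mem_inter_iff, Set.mem_setOf_eq, hz]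
          constructor
          · rintro ⟨hx, -⟩; exact hx
          · intro hx; exact ⟨hx, by linarith⟩
        have h3 : P ∩ side p 0 = ∅ := by
          ext x; simp only [side_zero, hsZer, Set.mem_inter_iff, Set.mem_setOf_eq, hz]
          simp only [Set.mem_empty_iff_false, iff_false]
          rintro ⟨-, heq⟩; linarith
        rw [h1, h2, h3, hempty]; ring
      · have h1 : P ∩ side p 1 = P := by
          ext x; simp only [side_one, hsNeg, Set.mem_inter_iff, Set.mem_setOf_eq, hz]
          constructor
          · rintro ⟨hx, -⟩; exact hx
          · intro hx; exact ⟨hx, by linarith⟩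
        have h2 : P ∩ side p 2 = P := by
          ext x; simp only [side_two, hsPos, Set.mem_inter_iff, Set.mem_setOf_eq, hz]
          constructor
          · rintro ⟨hx, -⟩; exact hx
          · intro hx; exact ⟨hx, by linarith⟩
        have h3 : P ∩ side p 0 = P := by
          ext x; simp only [side_zero, hsZer, Set.mem_inter_iff, Set.mem_setOf_eq, hz]
          constructor
          · rintro ⟨hx, -⟩; exact hx
          · intro hx; exact ⟨hx, by linarith⟩
        rw [h1, h2, h3]; ring
      · have h1 : P ∩ side p 1 = P := by
          ext x; simp only [side_one, hsNeg, Set.mem_inter_iff, Set.mem_setOf_eq, hz]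
          constructor
          · rintro ⟨hx, -⟩; exact hx
          · intro hx; exact ⟨hx, by linarith⟩
        have h2 : P ∩ side p 2 = ∅ := by
          ext x; simp only [side_two, hsPos, Set.mem_inter_iff, Set.mem_setOf_eq, hz]
          simp only [Set.mem_empty_iff_false, iff_false]
          rintro ⟨-, hle⟩; linarith
        have h3 : P ∩ side p 0 = ∅ := by
          ext x; simp only [side_zero, hsZer, Set.mem_inter_iff, Set.mem_setOf_eq, hz]
          simp only [Set.mem_empty_iff_false, iff_false]
          rintro ⟨-, heq⟩; linarith
        rw [h1, h2, h3, hempty]; ring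
    · rcases Set.eq_empty_or_nonempty (P ∩ side p 0) with hz | hz
      · -- P misses the hyperplane: P lies strictly on one side
        have hcover : P ⊆ {x | ⟪p.1, x⟫ < p.2} ∪ {x | p.2 < ⟪p.1, x⟫} := by
          intro x hx
          rcases lt_trichotomy ⟪p.1, x⟫ p.2 with h | h | h
          · exact Or.inl h
          · exact absurd (Set.mem_inter hx (by exact h : x ∈ side p 0)) (by
              rw [hz]; exact Set.notMem_empty x)
          · exact Or.inr h
        have hdisj : Disjoint {x : V | ⟪p.1, x⟫ < p.2} {x : V | p.2 < ⟪p.1, x⟫} := by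
          rw [Set.disjoint_left]
          intro x h1 h2
          have h1' : ⟪p.1, x⟫ < p.2 := h1
          have h2' : p.2 < ⟪p.1, x⟫ := h2
          linarith
        have hopen1 : IsOpen {x : V | ⟪p.1, x⟫ < p.2} :=
          isOpen_lt (innerSL ℝ p.1).continuous continuous_const
        have hopen2 : IsOpen {x : V | p.2 < ⟪p.1, x⟫} :=
          isOpen_lt continuous_const (innerSL ℝ p.1).continuous
        have hpc : IsPreconnected P := (hP.convex).isPreconnected
        rcases hpc.subset_or_subset hopen1 hopen2 hdisj hcover with hsub | hsub
        · have h1 : P ∩ side p 1 = P := by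
            apply Set.inter_eq_self_of_subset_left
            intro x hx
            show ⟪p.1, x⟫ ≤ p.2
            exact le_of_lt (hsub hx)
          have h2 : P ∩ side p 2 = ∅ := by
            ext x
            simp only [Set.mem_inter_iff, Set.mem_empty_iff_false, iff_false]
            rintro ⟨hx, hge⟩
            have := hsub hx
            have hge' : p.2 ≤ ⟪p.1, x⟫ := hge
            simp only [Set.mem_setOf_eq] at this
            linarith
          rw [h1, h2, hz, hempty]; ring
        · have h1 : P ∩ side p 1 = ∅ := by
            ext x
            simp only [Set.mem_inter_iff, Set.mem_empty_iff_false, iff_false]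
            rintro ⟨hx, hle⟩
            have := hsub hx
            have hle' : ⟪p.1, x⟫ ≤ p.2 := hle
            simp only [Set.mem_setOf_eq] at this
            linarith
          have h2 : P ∩ side p 2 = P := by
            apply Set.inter_eq_self_of_subset_left
            intro x hx
            show p.2 ≤ ⟪p.1, x⟫
            exact le_of_lt (hsub hx)
          rw [h1, h2, hz, hempty]; ring
      · have hthis := hweak P hP p.1 p.2 h0 hz
        have e1 : P ∩ side p 1 = P ∩ {x | ⟪p.1, x⟫ ≤ p.2} := rfl
        have e2 : P ∩ side p 2 = P ∩ {x | p.2 ≤ ⟪p.1, x⟫} := rfl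
        have e0 : P ∩ side p 0 = P ∩ {x | ⟪p.1, x⟫ = p.2} := rfl
        rw [e1, e2, e0]
        linarith
  · simp only [Set.empty_inter, hempty]
    ring

/-- The key cutting induction. -/
lemma key (hempty : φ ∅ = 0) (hweak : Weak φ) (H : Finset (V × ℝ)) :
    ∀ L : List (V × ℝ), (∀ p ∈ L, p ∈ H) →
    ∀ (ι : Type) (J : Finset ι) (β : ι → ℝ) (Q : ι → Set V),
      (∀ j ∈ J, PoE (Q j)) →
      (∀ j ∈ J, ∃ (t : Finset (V × ℝ)) (τ : V × ℝ → Fin 3), t ⊆ H ∧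
          (∀ p ∈ H, p ∉ t → p ∈ L) ∧ Q j = ⋂ p ∈ t, side p (τ p)) →
      (∀ x, ∑ j ∈ J, β j * ind (Q j) x = 0) →
      ∑ j ∈ J, β j * φ (Q j) = 0 := by
  intro L
  induction L with
  | nil =>
    intro _ ι J β Q hpoe hrep hzero
    apply ind_lemma φ hempty H J β Q _ hzero
    intro j hj
    obtain ⟨t, τ, htH, hmiss, hQ⟩ := hrep j hj
    have ht : t = H := Finset.Subset.antisymm htH (fun p hp => by
      by_contra hpt
      exact absurd (hmiss p hp hpt) List.not_mem_nil)
    exact ⟨τ, by rw [hQ, ht]; rfl⟩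
  | cons p L IH =>
    intro hL ι J β Q hpoe hrep hzero
    have hpH : p ∈ H := hL p List.mem_cons_self
    have hL' : ∀ q ∈ L, q ∈ H := fun q hq => hL q (List.mem_cons_of_mem p hq)
    -- new family indexed by ι × Fin 3
    set J' : Finset (ι × Fin 3) := J ×ˢ Finset.univ with hJ'
    set β' : ι × Fin 3 → ℝ := fun js => (if js.2 = 0 then (-1 : ℝ) else 1) * β js.1 with hβ'
    set Q' : ι × Fin 3 → Set V := fun js => Q js.1 ∩ side p js.2 with hQ'
    have hsum : ∀ f : Set V → ℝ,
        (∀ j ∈ J, f (Q j) = f (Q j ∩ side p 1) + f (Q j ∩ side p 2) - f (Q j ∩ side p 0)) →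
        ∑ js ∈ J', β' js * f (Q' js) = ∑ j ∈ J, β j * f (Q j) := by
      intro f hf
      rw [Finset.sum_product]
      apply Finset.sum_congr rfl
      intro j hj
      rw [hf j hj]
      rw [Fin.sum_univ_three]
      simp only [hβ', hQ', if_pos, if_neg (show (1:Fin 3) ≠ 0 by decide),
        if_neg (show (2:Fin 3) ≠ 0 by decide)]
      ring
    have hpoe' : ∀ js ∈ J', PoE (Q' js) := by
      intro js hjs
      obtain ⟨hj, -⟩ := Finset.mem_product.1 hjs
      exact (hpoe js.1 hj).inter_side p js.2
    have hrep' : ∀ js ∈ J', ∃ (t : Finset (V × ℝ)) (τ : V × ℝ → Fin 3), t ⊆ H ∧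
        (∀ q ∈ H, q ∉ t → q ∈ L) ∧ Q' js = ⋂ q ∈ t, side q (τ q) := by
      intro js hjs
      obtain ⟨hj, -⟩ := Finset.mem_product.1 hjs
      obtain ⟨t, τ, htH, hmiss, hQj⟩ := hrep js.1 hj
      classical
      by_cases hpt : p ∈ t
      · refine ⟨t, Function.update τ p (if τ p = js.2 then τ p else 0), htH, ?_, ?_⟩
        · intro q hq hqt
          rcases List.mem_cons.1 (hmiss q hq hqt) with rfl | hmem
          · exact absurd hpt hqt
          · exact hmem
        · show Q js.1 ∩ side p js.2 = _
          have hig : (⋂ q ∈ t.erase p,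
                side q (Function.update τ p (if τ p = js.2 then τ p else 0) q))
              = ⋂ q ∈ t.erase p, side q (τ q) :=
            Set.iInter₂_congr (fun q hq => by
              rw [Function.update_of_ne (Finset.ne_of_mem_erase hq)])
          rw [hQj, ← Finset.insert_erase hpt, Finset.set_biInter_insert,
            Finset.set_biInter_insert, Function.update_self, hig,
            Set.inter_right_comm, side_inter_side]
      · refine ⟨insert p t, Function.update τ p js.2, Finset.insert_subset hpH htH, ?_, ?_⟩
        · intro q hq hqt
          rw [Finset.mem_insert] at hqt
          push_neg at hqt
          have := hmiss q hq hqt.2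
          rcases List.mem_cons.1 this with rfl | hmem
          · exact absurd rfl hqt.1
          · exact hmem
        · show Q js.1 ∩ side p js.2 = _
          have hig : (⋂ q ∈ t, side q (Function.update τ p js.2 q)) = ⋂ q ∈ t, side q (τ q) := by
            apply Set.iInter₂_congr
            intro q hq
            rw [Function.update_of_ne (fun hqp => hpt (by rw [← hqp]; exact hq))]
          rw [hQj, Finset.set_biInter_insert, Function.update_self, hig]
          exact Set.inter_comm _ _
    have hzero' : ∀ x, ∑ js ∈ J', β' js * ind (Q' js) x = 0 := by
      intro x
      rw [hsum (fun S => ind S x) (fun j hj => (ind_side_split (Q j) p x).symm)]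
      exact hzero x
    have := IH hL' (ι × Fin 3) J' β' Q' hpoe' hrep' hzero'
    rw [hsum φ (fun j hj => phi_side_split φ hempty hweak (hpoe j hj) p)] at this
    exact this

end Phi



lemma HRep_eq_biInter (t : Finset (V × ℝ)) : HRep t = ⋂ p ∈ t, side p ((fun _ => 1) p) := by
  ext x
  simp only [HRep, Set.mem_setOf_eq, Set.mem_iInter, side_one]
  rfl

/-- The master lemma: any vanishing indicator combination of polytopes gives a
vanishing φ-combination. -/
theorem lmain (φ : Set V → ℝ) (hempty : φ ∅ = 0) (hweak : Weak φ)
    {ι : Type} (J : Finset ι) (β : ι → ℝ) (Q : ι → Set V)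
    (hpoe : ∀ j ∈ J, PoE (Q j))
    (hzero : ∀ x, ∑ j ∈ J, β j * ind (Q j) x = 0) :
    ∑ j ∈ J, β j * φ (Q j) = 0 := by
  classical
  set J' := J.filter (fun j => Q j ≠ ∅) with hJ'
  have hmemJ' : ∀ j ∈ J, j ∉ J' → Q j = ∅ := by
    intro j hj hj'
    by_contra hne
    exact hj' (Finset.mem_filter.2 ⟨hj, hne⟩)
  have hzero' : ∀ x, ∑ j ∈ J', β j * ind (Q j) x = 0 := by
    intro x
    rw [← hzero x]
    apply Finset.sum_subset (Finset.filter_subset _ _)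
    intro j hj hj'
    rw [hmemJ' j hj hj', ind_empty, mul_zero]
  have hpol : ∀ j ∈ J', Pol (Q j) := by
    intro j hj
    obtain ⟨hjJ, hne⟩ := Finset.mem_filter.1 hj
    rcases hpoe j hjJ with h | h
    · exact h
    · exact absurd h hne
  set T : ι → Finset (V × ℝ) := fun j =>
    if h : j ∈ J' then (pol_hrep (hpol j h)).choose else ∅ with hT
  have hTspec : ∀ j ∈ J', Q j = HRep (T j) := by
    intro j hj
    rw [hT]
    simp only [dif_pos hj]
    exact (pol_hrep (hpol j hj)).choose_spec
  set H : Finset (V × ℝ) := J'.biUnion T with hH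
  have hkey := key φ hempty hweak H H.toList (fun p hp => Finset.mem_toList.1 hp)
    ι J' β Q (fun j hj => hpoe j (Finset.filter_subset _ _ hj))
    (fun j hj => ⟨T j, fun _ => 1, Finset.subset_biUnion_of_mem T hj,
      fun p _ _ => Finset.mem_toList.2 (by assumption), by
        rw [hTspec j hj]; exact HRep_eq_biInter (T j)⟩)
    hzero'
  rw [← hkey]
  symm
  apply Finset.sum_subset (Finset.filter_subset _ _)
  intro j hj hj'
  rw [hmemJ' j hj hj', hempty, mul_zero]

lemma PoE_biInter {γ : Type} (s : Finset γ) (hne : s.Nonempty) (A : γ → Set V)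
    (h : ∀ i ∈ s, Pol (A i)) : PoE (⋂ i ∈ s, A i) := by
  classical
  induction hne using Finset.Nonempty.cons_induction with
  | singleton i =>
    simp only [Finset.mem_singleton, Set.iInter_iInter_eq_left]
    exact Or.inl (h i (Finset.mem_singleton_self i))
  | cons a s ha hne ihs =>
    have hc : (⋂ i ∈ Finset.cons a s ha, A i) = A a ∩ ⋂ i ∈ s, A i := by
      rw [Finset.cons_eq_insert, Finset.set_biInter_insert]
    rw [hc]
    exact PoE.inter (Or.inl (h a (Finset.mem_cons_self a s)))
      (ihs (fun i hi => h i (Finset.mem_cons_of_mem hi)))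

/-- indicator inclusion-exclusion over a finite index set -/
lemma ie_ind {γ : Type} (K : Finset γ) (A : γ → Set V) (x : V) :
    ∑ s ∈ K.powerset.filter (fun s => s.Nonempty),
      (-1:ℝ)^(s.card+1) * ind (⋂ i ∈ s, A i) x = ind (⋃ i ∈ K, A i) x := by
  classical
  set T := K.filter (fun i => x ∈ A i) with hT
  have hsub : T.powerset.filter (fun s => s.Nonempty)
      ⊆ K.powerset.filter (fun s => s.Nonempty) := by
    intro s hs
    obtain ⟨hs1, hs2⟩ := Finset.mem_filter.1 hs
    exact Finset.mem_filter.2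
      ⟨Finset.mem_powerset.2 ((Finset.mem_powerset.1 hs1).trans (Finset.filter_subset _ _)), hs2⟩
  have hstep : ∑ s ∈ K.powerset.filter (fun s => s.Nonempty),
      (-1:ℝ)^(s.card+1) * ind (⋂ i ∈ s, A i) x
      = ∑ s ∈ T.powerset.filter (fun s => s.Nonempty), (-1:ℝ)^(s.card+1) := by
    rw [← Finset.sum_subset hsub (fun s hs hs' => ?_)]
    · apply Finset.sum_congr rfl
      intro s hs
      obtain ⟨hs1, hs2⟩ := Finset.mem_filter.1 hs
      have hiT : ∀ i ∈ s, x ∈ A i := by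
        intro i hi
        exact (Finset.mem_filter.1 ((Finset.mem_powerset.1 hs1) hi)).2
      have : ind (⋂ i ∈ s, A i) x = 1 := if_pos (Set.mem_iInter₂.2 hiT)
      rw [this, mul_one]
    · obtain ⟨hs1, hs2⟩ := Finset.mem_filter.1 hs
      have : ¬ s ⊆ T := fun hsT => hs' (Finset.mem_filter.2 ⟨Finset.mem_powerset.2 hsT, hs2⟩)
      obtain ⟨i, his, hiT⟩ := Finset.not_subset.1 this
      have hxA : x ∉ A i := fun hxA =>
        hiT (Finset.mem_filter.2 ⟨(Finset.mem_powerset.1 hs1) his, hxA⟩)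
      have : ind (⋂ i ∈ s, A i) x = 0 :=
        if_neg (fun hmem => hxA (Set.mem_iInter₂.1 hmem i his))
      rw [this, mul_zero]
  rw [hstep]
  have htot : ∑ s ∈ T.powerset, (-1:ℝ)^(s.card) = if T = ∅ then 1 else 0 := by
    have := Finset.sum_powerset_neg_one_pow_card (x := T)
    have hcast : ((∑ m ∈ T.powerset, (-1 : ℤ) ^ m.card : ℤ) : ℝ)
        = ∑ m ∈ T.powerset, (-1:ℝ)^(m.card) := by
      push_cast
      rfl
    rw [← hcast, this]
    split <;> norm_num
  have hsplit := Finset.sum_filter_add_sum_filter_not T.powerset (fun s => s.Nonempty)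
    (fun s => (-1:ℝ)^(s.card+1))
  have hnotpart : ∑ s ∈ T.powerset.filter (fun s => ¬ s.Nonempty), (-1:ℝ)^(s.card+1) = -1 := by
    have : T.powerset.filter (fun s => ¬ s.Nonempty) = {∅} := by
      ext s
      simp only [Finset.mem_filter, Finset.mem_powerset, Finset.mem_singleton,
        Finset.not_nonempty_iff_eq_empty]
      constructor
      · rintro ⟨-, rfl⟩; rfl
      · rintro rfl; exact ⟨Finset.empty_subset T, rfl⟩
    rw [this, Finset.sum_singleton, Finset.card_empty]
    norm_num
  have htot' : ∑ s ∈ T.powerset, (-1:ℝ)^(s.card+1) = - (if T = ∅ then 1 else 0) := by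
    rw [← htot, ← Finset.sum_neg_distrib]
    apply Finset.sum_congr rfl
    intro s hs
    rw [pow_succ]
    ring
  have hmain : ∑ s ∈ T.powerset.filter (fun s => s.Nonempty), (-1:ℝ)^(s.card+1)
      = 1 - (if T = ∅ then 1 else 0) := by
    have := hsplit
    rw [htot'] at this
    linarith [this, hnotpart]
  rw [hmain]
  by_cases hTe : T = ∅
  · rw [if_pos hTe]
    have : x ∉ ⋃ i ∈ K, A i := by
      intro hmem
      obtain ⟨i, hiK, hxA⟩ := Set.mem_iUnion₂.1 hmem
      have : i ∈ T := Finset.mem_filter.2 ⟨hiK, hxA⟩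
      rw [hTe] at this
      exact Finset.notMem_empty i this
    rw [ind, if_neg this]
    norm_num
  · rw [if_neg hTe]
    obtain ⟨i, hi⟩ := Finset.nonempty_of_ne_empty hTe
    obtain ⟨hiK, hxA⟩ := Finset.mem_filter.1 hi
    have : x ∈ ⋃ i ∈ K, A i := Set.mem_iUnion₂.2 ⟨i, hiK, hxA⟩
    rw [ind, if_pos this]
    norm_num



section Ev

variable (φ : Set V → ℝ)

def pw (F : Finset (Set V)) : Finset (Finset (Set V)) :=
  F.powerset.filter (fun t => t.Nonempty)

def evF (F : Finset (Set V)) : ℝ :=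
  ∑ t ∈ pw F, (-1:ℝ)^(t.card+1) * φ (⋂₀ (t : Set (Set V)))

lemma sInter_eq_biInter (t : Finset (Set V)) :
    ⋂₀ (t : Set (Set V)) = ⋂ S ∈ t, S := by
  ext x
  simp [Set.sInter_eq_biInter]

lemma sUnion_eq_biUnion (t : Finset (Set V)) :
    ⋃₀ (t : Set (Set V)) = ⋃ S ∈ t, S := by
  ext x
  simp [Set.sUnion_eq_biUnion]

lemma PoE_sInter (t : Finset (Set V)) (hne : t.Nonempty) (h : ∀ A ∈ t, Pol A) :
    PoE (⋂₀ (t : Set (Set V))) := by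
  rw [sInter_eq_biInter]
  exact PoE_biInter t hne _ h

lemma evF_ind (F : Finset (Set V)) (x : V) :
    ∑ t ∈ pw F, (-1:ℝ)^(t.card+1) * ind (⋂₀ (t : Set (Set V))) x
      = ind (⋃₀ (F : Set (Set V))) x := by
  have := ie_ind F (fun S => S) x
  rw [sUnion_eq_biUnion]
  rw [← this]
  apply Finset.sum_congr rfl
  intro t ht
  rw [sInter_eq_biInter]

lemma rep_eq (hempty : φ ∅ = 0) (hweak : Weak φ) (F G : Finset (Set V))
    (hF : ∀ A ∈ F, Pol A) (hG : ∀ A ∈ G, Pol A)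
    (hU : ⋃₀ (F : Set (Set V)) = ⋃₀ (G : Set (Set V))) : evF φ F = evF φ G := by
  classical
  have h := lmain φ hempty hweak ((pw F).disjSum (pw G))
    (Sum.elim (fun t => (-1:ℝ)^(t.card+1)) (fun t => -(-1:ℝ)^(t.card+1)))
    (Sum.elim (fun t => ⋂₀ (t : Set (Set V))) (fun t => ⋂₀ (t : Set (Set V))))
    (fun j hj => by
      rcases j with t | t
      · rw [Finset.inl_mem_disjSum] at hj
        obtain ⟨h1, h2⟩ := Finset.mem_filter.1 hj
        exact PoE_sInter t h2 (fun A hA => hF A (Finset.mem_powerset.1 h1 hA))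
      · rw [Finset.inr_mem_disjSum] at hj
        obtain ⟨h1, h2⟩ := Finset.mem_filter.1 hj
        exact PoE_sInter t h2 (fun A hA => hG A (Finset.mem_powerset.1 h1 hA)))
    (fun x => by
      rw [Finset.sum_disjSum]
      simp only [Sum.elim_inl, Sum.elim_inr]
      have e1 := evF_ind F x
      have e2 := evF_ind G x
      have : ∑ t ∈ pw G, -(-1:ℝ)^(t.card+1) * ind (⋂₀ (t : Set (Set V))) x
          = - ∑ t ∈ pw G, (-1:ℝ)^(t.card+1) * ind (⋂₀ (t : Set (Set V))) x := by
        rw [← Finset.sum_neg_distrib]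
        apply Finset.sum_congr rfl
        intro t ht
        ring
      rw [this, e1, e2, hU]
      ring)
  rw [Finset.sum_disjSum] at h
  simp only [Sum.elim_inl, Sum.elim_inr] at h
  have : ∑ t ∈ pw G, -(-1:ℝ)^(t.card+1) * φ (⋂₀ (t : Set (Set V)))
      = - evF φ G := by
    rw [evF, ← Finset.sum_neg_distrib]
    apply Finset.sum_congr rfl
    intro t ht
    ring
  rw [this] at h
  have he : evF φ F = ∑ t ∈ pw F, (-1:ℝ)^(t.card+1) * φ (⋂₀ (t : Set (Set V))) := rfl
  linarith [h, he]

/-- Intersection representation of two polyhedra. -/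
def interRep (F G : Finset (Set V)) : Finset (Set V) :=
  ((F ×ˢ G).image (fun pq => pq.1 ∩ pq.2)).filter (fun S => S.Nonempty)

lemma interRep_pol (F G : Finset (Set V)) (hF : ∀ A ∈ F, Pol A) (hG : ∀ A ∈ G, Pol A) :
    ∀ A ∈ interRep F G, Pol A := by
  intro A hA
  obtain ⟨hA1, hA2⟩ := Finset.mem_filter.1 hA
  obtain ⟨pq, hpq, rfl⟩ := Finset.mem_image.1 hA1
  obtain ⟨h1, h2⟩ := Finset.mem_product.1 hpq
  rcases PoE.inter (Or.inl (hF _ h1)) (Or.inl (hG _ h2)) with h | h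
  · exact h
  · rw [h] at hA2
    exact absurd hA2 (by simp)

lemma interRep_sUnion (F G : Finset (Set V)) :
    ⋃₀ ((interRep F G : Finset (Set V)) : Set (Set V))
      = (⋃₀ (F : Set (Set V))) ∩ ⋃₀ (G : Set (Set V)) := by
  ext x
  simp only [Set.mem_sUnion, Set.mem_inter_iff, Finset.mem_coe]
  constructor
  · rintro ⟨S, hS, hxS⟩
    obtain ⟨hS1, -⟩ := Finset.mem_filter.1 hS
    obtain ⟨pq, hpq, rfl⟩ := Finset.mem_image.1 hS1
    obtain ⟨h1, h2⟩ := Finset.mem_product.1 hpq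
    exact ⟨⟨pq.1, h1, hxS.1⟩, ⟨pq.2, h2, hxS.2⟩⟩
  · rintro ⟨⟨S1, hS1, hx1⟩, ⟨S2, hS2, hx2⟩⟩
    refine ⟨S1 ∩ S2, ?_, ⟨hx1, hx2⟩⟩
    apply Finset.mem_filter.2
    refine ⟨Finset.mem_image.2 ⟨(S1, S2), Finset.mem_product.2 ⟨hS1, hS2⟩, rfl⟩, ⟨x, hx1, hx2⟩⟩

end Ev



lemma ind_union_inter (A B : Set V) (x : V) :
    ind (A ∪ B) x + ind (A ∩ B) x = ind A x + ind B x := by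
  by_cases hA : x ∈ A <;> by_cases hB : x ∈ B <;> simp [ind, hA, hB]

lemma ie_phi (φ : Set V → ℝ) (hempty : φ ∅ = 0) (hweak : Weak φ) {m : ℕ}
    (A : Fin m → Set V) (hA : ∀ i, Pol (A i)) (hU : Pol (⋃ i, A i)) :
    φ (⋃ i, A i) = ∑ s ∈ Finset.univ.powerset.filter (fun s : Finset (Fin m) => s.Nonempty),
      (-1:ℝ)^(s.card+1) * φ (⋂ i ∈ s, A i) := by
  classical
  have hbU : (⋃ i ∈ (Finset.univ : Finset (Fin m)), A i) = ⋃ i, A i := by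
    simp
  have h := lmain φ hempty hweak
    (ι := Finset (Fin m) ⊕ Unit)
    ((Finset.univ.powerset.filter (fun s : Finset (Fin m) => s.Nonempty)).disjSum Finset.univ)
    (Sum.elim (fun s => (-1:ℝ)^(s.card+1)) (fun _ => -1))
    (Sum.elim (fun s => ⋂ i ∈ s, A i) (fun _ => ⋃ i, A i))
    (fun j hj => by
      rcases j with s | u
      · rw [Finset.inl_mem_disjSum] at hj
        obtain ⟨-, h2⟩ := Finset.mem_filter.1 hj
        exact PoE_biInter s h2 A (fun i _ => hA i)
      · exact Or.inl hU)
    (fun x => by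
      rw [Finset.sum_disjSum]
      simp only [Sum.elim_inl, Sum.elim_inr]
      rw [ie_ind (Finset.univ : Finset (Fin m)) A x, hbU]
      simp only [Finset.sum_const, Finset.card_univ]
      norm_num)
  rw [Finset.sum_disjSum] at h
  simp only [Sum.elim_inl, Sum.elim_inr] at h
  simp only [Finset.sum_const, Finset.card_univ] at h
  have hcard : (Fintype.card Unit) = 1 := by simp
  rw [hcard] at h
  have : (1 : ℕ) • (-1 * φ (⋃ i, A i)) = - φ (⋃ i, A i) := by
    simp
  rw [this] at h
  linarith

lemma valuation_ev (φ : Set V → ℝ) (hempty : φ ∅ = 0) (hweak : Weak φ)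
    (F G : Finset (Set V)) (hF : ∀ A ∈ F, Pol A) (hG : ∀ A ∈ G, Pol A) :
    evF φ (F ∪ G) + evF φ (interRep F G) = evF φ F + evF φ G := by
  classical
  have hFG : ∀ A ∈ F ∪ G, Pol A := by
    intro A hA
    rcases Finset.mem_union.1 hA with h | h
    exacts [hF A h, hG A h]
  have hIR := interRep_pol F G hF hG
  have hq : ∀ t : Finset (Set V), ∀ X : Finset (Set V), t ∈ pw X → (∀ A ∈ X, Pol A) →
      PoE (⋂₀ (t : Set (Set V))) := by
    intro t X ht hX
    obtain ⟨h1, h2⟩ := Finset.mem_filter.1 ht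
    exact PoE_sInter t h2 (fun A hA => hX A (Finset.mem_powerset.1 h1 hA))
  have h := lmain φ hempty hweak
    (ι := (Finset (Set V) ⊕ Finset (Set V)) ⊕ (Finset (Set V) ⊕ Finset (Set V)))
    (((pw (F ∪ G)).disjSum (pw (interRep F G))).disjSum ((pw F).disjSum (pw G)))
    (Sum.elim (Sum.elim (fun t => (-1:ℝ)^(t.card+1)) (fun t => (-1:ℝ)^(t.card+1)))
      (Sum.elim (fun t => -(-1:ℝ)^(t.card+1)) (fun t => -(-1:ℝ)^(t.card+1))))
    (Sum.elim (Sum.elim (fun t => ⋂₀ (t : Set (Set V))) (fun t => ⋂₀ (t : Set (Set V))))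
      (Sum.elim (fun t => ⋂₀ (t : Set (Set V))) (fun t => ⋂₀ (t : Set (Set V)))))
    (fun j hj => by
      rcases j with (t | t) | (t | t)
      · rw [Finset.inl_mem_disjSum, Finset.inl_mem_disjSum] at hj
        exact hq t _ hj hFG
      · rw [Finset.inl_mem_disjSum, Finset.inr_mem_disjSum] at hj
        exact hq t _ hj hIR
      · rw [Finset.inr_mem_disjSum, Finset.inl_mem_disjSum] at hj
        exact hq t _ hj hF
      · rw [Finset.inr_mem_disjSum, Finset.inr_mem_disjSum] at hj
        exact hq t _ hj hG)
    (fun x => by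
      rw [Finset.sum_disjSum, Finset.sum_disjSum, Finset.sum_disjSum]
      simp only [Sum.elim_inl, Sum.elim_inr]
      have hneg : ∀ X : Finset (Set V),
          ∑ t ∈ pw X, -(-1:ℝ)^(t.card+1) * ind (⋂₀ (t : Set (Set V))) x
          = - ind (⋃₀ (X : Set (Set V))) x := by
        intro X
        rw [← evF_ind X x, ← Finset.sum_neg_distrib]
        apply Finset.sum_congr rfl
        intro t ht
        ring
      rw [evF_ind, evF_ind, hneg, hneg]
      have hu : ⋃₀ ((F ∪ G : Finset (Set V)) : Set (Set V))
          = ⋃₀ (F : Set (Set V)) ∪ ⋃₀ (G : Set (Set V)) := by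
        rw [Finset.coe_union, Set.sUnion_union]
      rw [hu, interRep_sUnion]
      have := ind_union_inter (⋃₀ (F : Set (Set V))) (⋃₀ (G : Set (Set V))) x
      linarith)
  rw [Finset.sum_disjSum, Finset.sum_disjSum, Finset.sum_disjSum] at h
  simp only [Sum.elim_inl, Sum.elim_inr] at h
  have hneg : ∀ X : Finset (Set V),
      ∑ t ∈ pw X, -(-1:ℝ)^(t.card+1) * φ (⋂₀ (t : Set (Set V))) = - evF φ X := by
    intro X
    rw [evF, ← Finset.sum_neg_distrib]
    apply Finset.sum_congr rfl
    intro t ht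
    ring
  rw [hneg, hneg] at h
  have e1 : evF φ (F ∪ G) = ∑ t ∈ pw (F ∪ G), (-1:ℝ)^(t.card+1) * φ (⋂₀ (t : Set (Set V))) := rfl
  have e2 : evF φ (interRep F G)
      = ∑ t ∈ pw (interRep F G), (-1:ℝ)^(t.card+1) * φ (⋂₀ (t : Set (Set V))) := rfl
  linarith

lemma evF_singleton (φ : Set V → ℝ) (P : Set V) : evF φ {P} = φ P := by
  classical
  have hpw : pw ({P} : Finset (Set V)) = {({P} : Finset (Set V))} := by
    ext t
    simp only [pw, Finset.mem_filter, Finset.mem_powerset, Finset.mem_singleton,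
      Finset.subset_singleton_iff, Finset.nonempty_iff_ne_empty]
    constructor
    · rintro ⟨h1 | h1, h2⟩
      · exact absurd h1 h2
      · exact h1
    · rintro rfl
      exact ⟨Or.inr rfl, by simp⟩
  rw [evF, hpw, Finset.sum_singleton]
  simp

lemma evF_empty (φ : Set V → ℝ) : evF φ (∅ : Finset (Set V)) = 0 := by
  have hpw : pw (∅ : Finset (Set V)) = ∅ := by
    ext t
    simp [pw, Finset.nonempty_iff_ne_empty, Finset.subset_empty]
  rw [evF, hpw, Finset.sum_empty]


end Groemer

/-- Every weakly additive real function on convex polytopes is fully additive and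
admits an additive extension (a valuation) to all polyhedra. -/
theorem stmt5 {n : ℕ} (φ : Set (E n) → ℝ) (hempty : φ ∅ = 0)
    (hweak : ∀ P : Set (E n), IsPolytope P → ∀ (u : E n) (c : ℝ), u ≠ 0 →
      (P ∩ {x | ⟪u, x⟫ = c}).Nonempty →
      φ P = φ (P ∩ {x | c ≤ ⟪u, x⟫}) + φ (P ∩ {x | ⟪u, x⟫ ≤ c}) - φ (P ∩ {x | ⟪u, x⟫ = c})) :
    (∀ (m : ℕ) (A : Fin m → Set (E n)), (∀ i, IsPolytope (A i)) →
      IsPolytope (⋃ i, A i) →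
      φ (⋃ i, A i) =
        ∑ s ∈ Finset.univ.powerset.filter (fun s : Finset (Fin m) => s.Nonempty),
          (-1 : ℝ) ^ (s.card + 1) * φ (⋂ i ∈ s, A i)) ∧
    ∃ φ' : Set (E n) → ℝ, (∀ P : Set (E n), IsPolytope P → φ' P = φ P) ∧ φ' ∅ = 0 ∧
      ∀ A B : Set (E n), IsPolyhedron A → IsPolyhedron B →
        φ' (A ∪ B) + φ' (A ∩ B) = φ' A + φ' B := by
  classical
  have hweak' : Groemer.Weak φ := hweak
  constructor
  · intro m A hA hU
    exact Groemer.ie_phi φ hempty hweak' A hA hU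
  · set Phi : Set (E n) → ℝ := fun S =>
      if h : IsPolyhedron S then Groemer.evF φ (Exists.choose h) else 0 with hPhi
    have hPhi_eq : ∀ (S : Set (E n)) (F : Finset (Set (E n))),
        (∀ A ∈ F, IsPolytope A) → S = ⋃₀ ↑F → Phi S = Groemer.evF φ F := by
      intro S F h1 h2
      have hpoly : IsPolyhedron S := ⟨F, h1, h2⟩
      rw [hPhi]
      simp only [dif_pos hpoly]
      obtain ⟨g1, g2⟩ := Exists.choose_spec hpoly
      exact Groemer.rep_eq φ hempty hweak' _ F g1 h1 (by rw [← g2, ← h2])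
    refine ⟨Phi, ?_, ?_, ?_⟩
    · intro P hP
      rw [hPhi_eq P {P} (by intro A hA; rw [Finset.mem_singleton.1 hA]; exact hP) (by simp)]
      exact Groemer.evF_singleton φ P
    · rw [hPhi_eq ∅ ∅ (by intro A hA; exact absurd hA (Finset.notMem_empty A)) (by simp)]
      exact Groemer.evF_empty φ
    · intro A B hA hB
      obtain ⟨F, hF1, rfl⟩ := hA
      obtain ⟨G, hG1, rfl⟩ := hB
      rw [hPhi_eq _ (F ∪ G)
          (by intro A hA; rcases Finset.mem_union.1 hA with h | h; exacts [hF1 A h, hG1 A h])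
          (by rw [Finset.coe_union, Set.sUnion_union]),
        hPhi_eq _ (Groemer.interRep F G) (Groemer.interRep_pol F G hF1 hG1)
          (Groemer.interRep_sUnion F G).symm,
        hPhi_eq _ F hF1 rfl, hPhi_eq _ G hG1 rfl]
      exact Groemer.valuation_ev φ hempty hweak' F G hF1 hG1
end
end

section
/- Every weakly additive real function on the family of convex polyhedral cones in ℝⁿ is fully additive and admits an additive extension to the family of finite unions of relatively open polyhedral cones. -/
open scoped RealInnerProductSpace
open MeasureTheory

attribute [local instance] Classical.propDecidable

noncomputable section

namespace Stmt6Aux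

open Finset

variable {n : ℕ}

/-- Real-valued indicator function. -/
def indc (C : Set (E n)) : E n → ℝ := fun x => if x ∈ C then (1:ℝ) else 0

lemma indc_inter (A B : Set (E n)) : indc (A ∩ B) = indc A * indc B := by
  funext x
  by_cases hA : x ∈ A <;> by_cases hB : x ∈ B <;>
    simp [indc, hA, hB, Set.mem_inter_iff]

lemma indc_union_add_inter (A B : Set (E n)) :
    indc (A ∪ B) + indc (A ∩ B) = indc A + indc B := by
  funext x
  by_cases hA : x ∈ A <;> by_cases hB : x ∈ B <;> simp [indc, hA, hB]

lemma poly_inter {C D : Set (E n)} (hC : IsPolyhedralCone C) (hD : IsPolyhedralCone D) :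
    IsPolyhedralCone (C ∩ D) := by
  obtain ⟨s, rfl⟩ := hC
  obtain ⟨t, rfl⟩ := hD
  refine ⟨s ∪ t, ?_⟩
  ext x
  simp only [Set.mem_inter_iff, Set.mem_setOf_eq, Finset.mem_union]
  constructor
  · rintro ⟨h1, h2⟩ u (hu | hu)
    · exact h1 u hu
    · exact h2 u hu
  · intro h
    exact ⟨fun u hu => h u (Or.inl hu), fun u hu => h u (Or.inr hu)⟩

lemma poly_univ : IsPolyhedralCone (Set.univ : Set (E n)) := by
  refine ⟨∅, ?_⟩
  ext x; simp

lemma poly_halfspace (u : E n) : IsPolyhedralCone {x : E n | 0 ≤ ⟪u, x⟫} := by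
  refine ⟨{-u}, ?_⟩
  ext x; simp [inner_neg_left, neg_nonpos]

/-- The span of indicators of polyhedral cones. -/
def Spanned {n : ℕ} (f : E n → ℝ) : Prop :=
  ∃ c : Set (E n) →₀ ℝ, (∀ C ∈ c.support, IsPolyhedralCone C) ∧
    Finsupp.linearCombination ℝ indc c = f

lemma spanned_indc {C : Set (E n)} (hC : IsPolyhedralCone C) : Spanned (indc C) := by
  refine ⟨Finsupp.single C 1, ?_, ?_⟩
  · intro D hD
    have := Finsupp.support_single_subset hD
    simp only [Finset.mem_singleton] at this
    subst this; exact hC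
  · simp [Finsupp.linearCombination_single]

lemma spanned_one : Spanned (1 : E n → ℝ) := by
  have h : indc (Set.univ : Set (E n)) = 1 := by
    funext x; simp [indc]
  rw [← h]; exact spanned_indc poly_univ

lemma Spanned.add {f g : E n → ℝ} (hf : Spanned f) (hg : Spanned g) : Spanned (f + g) := by
  obtain ⟨c, hc, hcf⟩ := hf
  obtain ⟨d, hd, hdg⟩ := hg
  refine ⟨c + d, ?_, by rw [map_add, hcf, hdg]⟩
  intro C hC
  rcases Finset.mem_union.1 (Finsupp.support_add hC) with h | h
  exacts [hc C h, hd C h]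

lemma Spanned.sub {f g : E n → ℝ} (hf : Spanned f) (hg : Spanned g) : Spanned (f - g) := by
  obtain ⟨c, hc, hcf⟩ := hf
  obtain ⟨d, hd, hdg⟩ := hg
  refine ⟨c - d, ?_, by rw [map_sub, hcf, hdg]⟩
  intro C hC
  classical
  rcases Finset.mem_union.1 (Finsupp.support_sub hC) with h | h
  exacts [hc C h, hd C h]

lemma Spanned.mul {f g : E n → ℝ} (hf : Spanned f) (hg : Spanned g) : Spanned (f * g) := by
  classical
  obtain ⟨c, hc, hcf⟩ := hf
  obtain ⟨d, hd, hdg⟩ := hg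
  refine ⟨c.sum fun C a => d.sum fun D b => Finsupp.single (C ∩ D) (a * b), ?_, ?_⟩
  · intro X hX
    have h1 := Finsupp.support_sum hX
    rcases Finset.mem_biUnion.1 h1 with ⟨C, hCmem, hX1⟩
    have h2 := Finsupp.support_sum hX1
    rcases Finset.mem_biUnion.1 h2 with ⟨D, hDmem, hX2⟩
    have h3 := Finsupp.support_single_subset hX2
    simp only [Finset.mem_singleton] at h3
    subst h3
    exact poly_inter (hc C hCmem) (hd D hDmem)
  · have hL : Finsupp.linearCombination ℝ (indc (n := n))
        (c.sum fun C a => d.sum fun D b => Finsupp.single (C ∩ D) (a * b))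
        = ∑ C ∈ c.support, ∑ D ∈ d.support, (c C * d D) • indc (C ∩ D) := by
      rw [Finsupp.sum]
      rw [map_sum]
      refine Finset.sum_congr rfl fun C _ => ?_
      rw [Finsupp.sum, map_sum]
      refine Finset.sum_congr rfl fun D _ => ?_
      rw [Finsupp.linearCombination_single]
    rw [hL, ← hcf, ← hdg, Finsupp.linearCombination_apply, Finsupp.linearCombination_apply,
      Finsupp.sum, Finsupp.sum, Finset.sum_mul_sum]
    refine Finset.sum_congr rfl fun C _ => Finset.sum_congr rfl fun D _ => ?_
    rw [indc_inter, smul_mul_smul_comm]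

lemma spanned_prod {ι : Type*} (F : Finset ι) (f : ι → E n → ℝ)
    (h : ∀ i ∈ F, Spanned (f i)) : Spanned (∏ i ∈ F, f i) :=
  Finset.prod_induction f Spanned (fun _ _ ha hb => ha.mul hb) spanned_one h

end Stmt6Aux
namespace Stmt6Aux

variable {n : ℕ}

/-- Weak sign condition. -/
def scond : SignType → ℝ → Prop
  | SignType.neg, r => r ≤ 0
  | SignType.zero, r => r = 0
  | SignType.pos, r => 0 ≤ r

/-- Strict sign condition. -/
def sconds : SignType → ℝ → Prop
  | SignType.neg, r => r < 0
  | SignType.zero, r => r = 0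
  | SignType.pos, r => 0 < r

lemma scond_of_sconds {s : SignType} {r : ℝ} (h : sconds s r) : scond s r := by
  cases s with
  | zero => exact h
  | neg => exact le_of_lt h
  | pos => exact le_of_lt h

lemma scond_of_zero {s : SignType} {r : ℝ} (h : r = 0) : scond s r := by
  subst h; cases s <;> simp [scond]

lemma sconds_zero_unique {s : SignType} {r : ℝ} (h : sconds s r) (h0 : r = 0) : s = 0 := by
  subst h0
  cases s with
  | zero => rfl
  | neg => exact absurd h (lt_irrefl 0)
  | pos => exact absurd h (lt_irrefl 0)

/-- Cone given by optional sign constraints on a finite set of normals. -/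
def Dcone (L : Finset (E n)) (t : E n → Option SignType) : Set (E n) :=
  {x | ∀ u ∈ L, ∀ s : SignType, t u = some s → scond s ⟪u, x⟫}

/-- Relatively open cell of the arrangement. -/
def Rcell (L : Finset (E n)) (σ : {u // u ∈ L} → SignType) : Set (E n) :=
  {x | ∀ u : {u // u ∈ L}, sconds (σ u) ⟪(u : E n), x⟫}

/-- Totalize a sign vector into an optional constraint map. -/
def totalize (L : Finset (E n)) (σ : {u // u ∈ L} → SignType) : E n → Option SignType :=
  fun u => if h : u ∈ L then some (σ ⟨u, h⟩) else none

/-- `σ` is compatible with constraint map `t`. -/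
def compat (L : Finset (E n)) (σ : {u // u ∈ L} → SignType) (t : E n → Option SignType) : Prop :=
  ∀ (u : {u // u ∈ L}) (s : SignType), t u = some s → σ u = s ∨ σ u = 0

/-- Subface order on total sign vectors. -/
def sle {L : Finset (E n)} (σ' σ : {u // u ∈ L} → SignType) : Prop :=
  ∀ u, σ' u = σ u ∨ σ' u = 0

lemma mem_Dcone_totalize {L : Finset (E n)} {σ : {u // u ∈ L} → SignType} {x : E n} :
    x ∈ Dcone L (totalize L σ) ↔ ∀ u : {u // u ∈ L}, scond (σ u) ⟪(u : E n), x⟫ := by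
  constructor
  · intro hx u
    exact hx u u.2 (σ u) (by simp [totalize, u.2])
  · intro hx u hu s hs
    simp only [totalize, dif_pos hu] at hs
    obtain rfl : σ ⟨u, hu⟩ = s := Option.some.inj hs
    exact hx ⟨u, hu⟩

lemma Rcell_subset_Dcone {L : Finset (E n)} (σ : {u // u ∈ L} → SignType) :
    Rcell L σ ⊆ Dcone L (totalize L σ) := by
  intro x hx
  exact mem_Dcone_totalize.2 fun u => scond_of_sconds (hx u)

lemma Dcone_mono {L : Finset (E n)} {σ' σ : {u // u ∈ L} → SignType} (h : sle σ' σ) :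
    Dcone L (totalize L σ') ⊆ Dcone L (totalize L σ) := by
  intro x hx
  rw [mem_Dcone_totalize] at hx ⊢
  intro u
  rcases h u with h' | h'
  · rw [← h']; exact hx u
  · have := hx u
    rw [h'] at this
    exact scond_of_zero this

lemma compat_totalize {L : Finset (E n)} {σ' σ : {u // u ∈ L} → SignType} :
    compat L σ' (totalize L σ) ↔ sle σ' σ := by
  constructor
  · intro h u
    exact h u (σ u) (by simp [totalize, u.2])
  · intro h u s hs
    simp only [totalize, dif_pos u.2] at hs
    obtain rfl : σ u = s := by
      rcases u with ⟨u, hu⟩; exact Option.some.inj hs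
    exact h u

/-- A `Dcone` is a polyhedral cone. -/
lemma poly_Dcone (L : Finset (E n)) (t : E n → Option SignType) :
    IsPolyhedralCone (Dcone L t) := by
  classical
  refine ⟨L.biUnion (fun u => match t u with
    | none => (∅ : Finset (E n))
    | some SignType.neg => {u}
    | some SignType.pos => {-u}
    | some SignType.zero => {u, -u}), ?_⟩
  ext x
  simp only [Dcone, Set.mem_setOf_eq, Finset.mem_biUnion]
  constructor
  · rintro hx v ⟨u, huL, hmem⟩
    rcases h : t u with _ | s
    · rw [h] at hmem; exact absurd hmem (Finset.notMem_empty v)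
    · cases s with
      | neg =>
        rw [h] at hmem
        have hv : v = u := by simpa using hmem
        subst hv
        exact hx v huL SignType.neg h
      | pos =>
        rw [h] at hmem
        have hv : v = -u := by simpa using hmem
        subst hv
        have := hx u huL SignType.pos h
        rw [inner_neg_left]
        exact neg_nonpos.2 this
      | zero =>
        rw [h] at hmem
        have h0 : ⟪u, x⟫ = 0 := hx u huL SignType.zero h
        rcases Finset.mem_insert.1 hmem with hv | hv
        · subst hv; rw [h0]
        · have hv : v = -u := by simpa using hv
          subst hv
          rw [inner_neg_left, h0, neg_zero]
  · intro hx u huL s hs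
    cases s with
    | neg => exact hx u ⟨u, huL, by rw [hs]; exact Finset.mem_singleton_self u⟩
    | pos =>
      have := hx (-u) ⟨u, huL, by rw [hs]; exact Finset.mem_singleton_self (-u)⟩
      rw [inner_neg_left] at this
      exact neg_nonpos.1 this
    | zero =>
      have h1 : ⟪u, x⟫ ≤ 0 := hx u ⟨u, huL, by rw [hs]; exact Finset.mem_insert_self _ _⟩
      have h2 := hx (-u) ⟨u, huL, by
        rw [hs]; exact Finset.mem_insert.2 (Or.inr (Finset.mem_singleton_self (-u)))⟩
      rw [inner_neg_left] at h2
      exact le_antisymm h1 (by linarith)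

/-- If the open cell is empty, the closed cell lies in some constraint hyperplane. -/
lemma exists_perp_of_empty {L : Finset (E n)} {σ : {u // u ∈ L} → SignType}
    (h : ¬ (Rcell L σ).Nonempty) :
    ∃ u : {u // u ∈ L}, σ u ≠ 0 ∧ ∀ x ∈ Dcone L (totalize L σ), ⟪(u : E n), x⟫ = 0 := by
  classical
  by_contra hcon
  push_neg at hcon
  -- hcon : ∀ u, σ u ≠ 0 → ∃ x ∈ Dcone L (totalize L σ), ⟪u, x⟫ ≠ 0
  apply h
  have hzero : (0 : E n) ∈ Dcone L (totalize L σ) :=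
    mem_Dcone_totalize.2 fun u => scond_of_zero (inner_zero_right _)
  set S : Finset {u // u ∈ L} := Finset.univ.filter (fun u => σ u ≠ 0) with hS
  set xw : {u // u ∈ L} → E n := fun u =>
    if hu : σ u ≠ 0 then (hcon u hu).choose else 0 with hxw
  have hxwD : ∀ u, xw u ∈ Dcone L (totalize L σ) := by
    intro u
    by_cases hu : σ u ≠ 0
    · rw [hxw]; simp only [dif_pos hu]
      exact (hcon u hu).choose_spec.1
    · rw [hxw]; simp only [dif_neg hu]; exact hzero
  have hxws : ∀ u ∈ S, ⟪(u : E n), xw u⟫ ≠ 0 := by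
    intro u hu
    have hu' : σ u ≠ 0 := (Finset.mem_filter.1 hu).2
    rw [hxw]; simp only [dif_pos hu']
    exact (hcon u hu').choose_spec.2
  refine ⟨∑ u ∈ S, xw u, fun v => ?_⟩
  have hinner : ⟪(v : E n), ∑ u ∈ S, xw u⟫ = ∑ u ∈ S, ⟪(v : E n), xw u⟫ :=
    inner_sum S xw (v : E n)
  have hterm : ∀ u ∈ S, scond (σ v) ⟪(v : E n), xw u⟫ :=
    fun u _ => mem_Dcone_totalize.1 (hxwD u) v
  rcases hsv : σ v with _ | _ | _
  · -- σ v = 0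
    show (⟪(v : E n), ∑ u ∈ S, xw u⟫ = 0)
    rw [hinner]
    refine Finset.sum_eq_zero fun u hu => ?_
    have := hterm u hu; rw [hsv] at this; exact this
  · -- σ v = neg
    show (⟪(v : E n), ∑ u ∈ S, xw u⟫ < 0)
    rw [hinner]
    have hvS : v ∈ S := Finset.mem_filter.2 ⟨Finset.mem_univ v, by rw [hsv]; decide⟩
    rw [← Finset.add_sum_erase S _ hvS]
    have h1 : ⟪(v : E n), xw v⟫ < 0 := by
      have hle := hterm v hvS; rw [hsv] at hle
      exact lt_of_le_of_ne hle (hxws v hvS)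
    have h2 : ∑ u ∈ S.erase v, ⟪(v : E n), xw u⟫ ≤ 0 := by
      refine Finset.sum_nonpos fun u hu => ?_
      have := hterm u (Finset.mem_of_mem_erase hu); rw [hsv] at this; exact this
    linarith
  · -- σ v = pos
    show (0 < ⟪(v : E n), ∑ u ∈ S, xw u⟫)
    rw [hinner]
    have hvS : v ∈ S := Finset.mem_filter.2 ⟨Finset.mem_univ v, by rw [hsv]; decide⟩
    rw [← Finset.add_sum_erase S _ hvS]
    have h1 : 0 < ⟪(v : E n), xw v⟫ := by
      have hle := hterm v hvS; rw [hsv] at hle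
      exact lt_of_le_of_ne hle (Ne.symm (hxws v hvS))
    have h2 : 0 ≤ ∑ u ∈ S.erase v, ⟪(v : E n), xw u⟫ := by
      refine Finset.sum_nonneg fun u hu => ?_
      have := hterm u (Finset.mem_of_mem_erase hu); rw [hsv] at this; exact this
    linarith

/-- Splitting a `Dcone` by a hyperplane. -/
lemma Dcone_update (L : Finset (E n)) (t : E n → Option SignType) {u : E n} (hu : u ∈ L)
    (hnone : t u = none) (s₀ : SignType) :
    Dcone L (Function.update t u (some s₀)) = Dcone L t ∩ {x | scond s₀ ⟪u, x⟫} := by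
  classical
  ext x
  simp only [Dcone, Set.mem_inter_iff, Set.mem_setOf_eq]
  constructor
  · intro hx
    refine ⟨fun v hv s hs => ?_, hx u hu s₀ (by rw [Function.update_self])⟩
    by_cases hvu : v = u
    · subst hvu; rw [hnone] at hs; cases hs
    · exact hx v hv s (by rwa [Function.update_of_ne hvu])
  · rintro ⟨hx, hxu⟩ v hv s hs
    by_cases hvu : v = u
    · subst hvu
      rw [Function.update_self] at hs
      obtain rfl : s₀ = s := Option.some.inj hs
      exact hxu
    · rw [Function.update_of_ne hvu] at hs
      exact hx v hv s hs


lemma compat_update {L : Finset (E n)} (σ : {u // u ∈ L} → SignType)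
    (t : E n → Option SignType) {u : E n} (hu : u ∈ L) (hnone : t u = none) (s₀ : SignType) :
    compat L σ (Function.update t u (some s₀)) ↔
      compat L σ t ∧ (σ ⟨u, hu⟩ = s₀ ∨ σ ⟨u, hu⟩ = 0) := by
  classical
  constructor
  · intro h
    refine ⟨fun v s hvs => ?_, h ⟨u, hu⟩ s₀ (by simp [Function.update_self])⟩
    have hvu : (v : E n) ≠ u := by
      intro he; rw [he, hnone] at hvs; cases hvs
    exact h v s (by rwa [Function.update_of_ne hvu])
  · rintro ⟨h1, h2⟩ v s hvs
    by_cases hvu : (v : E n) = u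
    · have hv : v = ⟨u, hu⟩ := Subtype.ext hvu
      subst hv
      rw [hvu, Function.update_self] at hvs
      obtain rfl : s₀ = s := Option.some.inj hvs
      exact h2
    · rw [Function.update_of_ne hvu] at hvs
      exact h1 v s hvs

end Stmt6Aux
namespace Stmt6Aux

variable {n : ℕ}

/-- Auxiliary recursion defining the open-cell weights. -/
noncomputable def psiAux (φ : Set (E n) → ℝ) (L : Finset (E n)) :
    ℕ → ({u // u ∈ L} → SignType) → ℝ
  | 0, σ => φ (Dcone L (totalize L σ))
  | (k+1), σ => φ (Dcone L (totalize L σ)) -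
      ∑ σ' : {u // u ∈ L} → SignType,
        if (Rcell L σ').Nonempty ∧ sle σ' σ ∧ σ' ≠ σ then psiAux φ L k σ' else 0

/-- The support of a sign vector. -/
def suppS {L : Finset (E n)} (σ : {u // u ∈ L} → SignType) : Finset {u // u ∈ L} :=
  Finset.univ.filter (fun u => σ u ≠ 0)

lemma suppS_card_lt {L : Finset (E n)} {σ' σ : {u // u ∈ L} → SignType}
    (hsle : sle σ' σ) (hne : σ' ≠ σ) : (suppS σ').card < (suppS σ).card := by
  classical
  apply Finset.card_lt_card
  constructor
  · intro u hu
    have hu' : σ' u ≠ 0 := (Finset.mem_filter.1 hu).2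
    rcases hsle u with h | h
    · exact Finset.mem_filter.2 ⟨Finset.mem_univ u, h ▸ hu'⟩
    · exact absurd h hu'
  · intro hsub
    obtain ⟨u, hu⟩ : ∃ u, σ' u ≠ σ u := Function.ne_iff.1 hne
    have h0 : σ' u = 0 := (hsle u).resolve_left hu
    have hσu : σ u ≠ 0 := fun hc => hu (by rw [h0, hc])
    have hmem : u ∈ suppS σ := Finset.mem_filter.2 ⟨Finset.mem_univ u, hσu⟩
    exact (Finset.mem_filter.1 (hsub hmem)).2 h0

lemma zero_mem_Rcell {L : Finset (E n)} {σ : {u // u ∈ L} → SignType}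
    (h : ∀ u, σ u = 0) : (0 : E n) ∈ Rcell L σ := by
  intro u
  rw [h u]
  show ⟪(u : E n), (0 : E n)⟫ = 0
  exact inner_zero_right _

lemma psiAux_zero (φ : Set (E n) → ℝ) (L : Finset (E n)) (σ : {u // u ∈ L} → SignType) :
    psiAux φ L 0 σ = φ (Dcone L (totalize L σ)) := rfl

lemma psiAux_succ (φ : Set (E n) → ℝ) (L : Finset (E n)) (k : ℕ)
    (σ : {u // u ∈ L} → SignType) :
    psiAux φ L (k+1) σ = φ (Dcone L (totalize L σ)) -
      ∑ σ' : {u // u ∈ L} → SignType,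
        if (Rcell L σ').Nonempty ∧ sle σ' σ ∧ σ' ≠ σ then psiAux φ L k σ' else 0 := rfl

lemma psiAux_stab (φ : Set (E n) → ℝ) (L : Finset (E n)) :
    ∀ k (σ : {u // u ∈ L} → SignType), (suppS σ).card ≤ k →
      psiAux φ L (k+1) σ = psiAux φ L k σ := by
  intro k
  induction k with
  | zero =>
    intro σ hσ
    have hzero : ∀ u, σ u = 0 := by
      intro u
      by_contra hu
      have hmem : u ∈ suppS σ := Finset.mem_filter.2 ⟨Finset.mem_univ u, hu⟩
      have := Finset.card_pos.2 ⟨u, hmem⟩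
      omega
    have hsum : ∑ σ' : {u // u ∈ L} → SignType,
        (if (Rcell L σ').Nonempty ∧ sle σ' σ ∧ σ' ≠ σ then psiAux φ L 0 σ' else 0) = 0 := by
      refine Finset.sum_eq_zero fun σ' _ => ?_
      rw [if_neg]
      rintro ⟨_, hsle, hne⟩
      apply hne
      funext u
      rcases hsle u with h | h
      · exact h
      · rw [h, hzero u]
    rw [psiAux_succ, hsum, sub_zero, psiAux_zero]
  | succ k IH =>
    intro σ hσ
    rw [psiAux_succ, psiAux_succ]
    congr 1
    refine Finset.sum_congr rfl fun σ' _ => ?_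
    by_cases hc : (Rcell L σ').Nonempty ∧ sle σ' σ ∧ σ' ≠ σ
    · rw [if_pos hc, if_pos hc, IH σ' (by have := suppS_card_lt hc.2.1 hc.2.2; omega)]
    · rw [if_neg hc, if_neg hc]

/-- The open-cell weight function. -/
noncomputable def psiW (φ : Set (E n) → ℝ) (L : Finset (E n))
    (σ : {u // u ∈ L} → SignType) : ℝ :=
  psiAux φ L (Fintype.card {u // u ∈ L}) σ

lemma psiW_spec (φ : Set (E n) → ℝ) (L : Finset (E n)) (σ : {u // u ∈ L} → SignType) :
    φ (Dcone L (totalize L σ)) = psiW φ L σ +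
      ∑ σ' : {u // u ∈ L} → SignType,
        if (Rcell L σ').Nonempty ∧ sle σ' σ ∧ σ' ≠ σ then psiW φ L σ' else 0 := by
  have hcard : (suppS σ).card ≤ Fintype.card {u // u ∈ L} := by
    rw [← Finset.card_univ]
    exact Finset.card_le_card (Finset.filter_subset _ _)
  have h := psiAux_stab φ L (Fintype.card {u // u ∈ L}) σ hcard
  rw [psiAux] at h
  simp only [psiW]
  rw [← h]
  ring

lemma claimA_ne (φ : Set (E n) → ℝ) (L : Finset (E n)) (σ : {u // u ∈ L} → SignType)
    (hne : (Rcell L σ).Nonempty) :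
    φ (Dcone L (totalize L σ)) =
      ∑ σ' : {u // u ∈ L} → SignType,
        if (Rcell L σ').Nonempty ∧ sle σ' σ then psiW φ L σ' else 0 := by
  classical
  rw [psiW_spec φ L σ]
  have h1 : ∑ σ' : {u // u ∈ L} → SignType,
      (if (Rcell L σ').Nonempty ∧ sle σ' σ then psiW φ L σ' else 0)
      = (if (Rcell L σ).Nonempty ∧ sle σ σ then psiW φ L σ else 0)
        + ∑ σ' ∈ Finset.univ.erase σ,
            (if (Rcell L σ').Nonempty ∧ sle σ' σ then psiW φ L σ' else 0) :=
    (Finset.add_sum_erase _ _ (Finset.mem_univ σ)).symm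
  rw [h1, if_pos ⟨hne, fun u => Or.inl rfl⟩]
  congr 1
  have h2 : ∑ σ' : {u // u ∈ L} → SignType,
      (if (Rcell L σ').Nonempty ∧ sle σ' σ ∧ σ' ≠ σ then psiW φ L σ' else 0)
      = (if (Rcell L σ).Nonempty ∧ sle σ σ ∧ σ ≠ σ then psiW φ L σ else 0)
        + ∑ σ' ∈ Finset.univ.erase σ,
            (if (Rcell L σ').Nonempty ∧ sle σ' σ ∧ σ' ≠ σ then psiW φ L σ' else 0) :=
    (Finset.add_sum_erase _ _ (Finset.mem_univ σ)).symm
  rw [h2, if_neg (by rintro ⟨_, _, hne'⟩; exact hne' rfl), zero_add]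
  refine Finset.sum_congr rfl fun σ' hσ' => ?_
  have hne' : σ' ≠ σ := (Finset.mem_erase.1 hσ').1
  by_cases hc : (Rcell L σ').Nonempty ∧ sle σ' σ
  · rw [if_pos ⟨hc.1, hc.2, hne'⟩, if_pos hc]
  · rw [if_neg (fun h => hc ⟨h.1, h.2.1⟩), if_neg hc]

lemma claimA (φ : Set (E n) → ℝ) (L : Finset (E n)) :
    ∀ k (σ : {u // u ∈ L} → SignType), (suppS σ).card ≤ k →
      φ (Dcone L (totalize L σ)) =
        ∑ σ' : {u // u ∈ L} → SignType,
          if (Rcell L σ').Nonempty ∧ sle σ' σ then psiW φ L σ' else 0 := by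
  intro k
  induction k with
  | zero =>
    intro σ hσ
    have hzero : ∀ u, σ u = 0 := by
      intro u
      by_contra hu
      have hmem : u ∈ suppS σ := Finset.mem_filter.2 ⟨Finset.mem_univ u, hu⟩
      have := Finset.card_pos.2 ⟨u, hmem⟩
      omega
    exact claimA_ne φ L σ ⟨0, zero_mem_Rcell hzero⟩
  | succ k IH =>
    intro σ hσ
    by_cases hne : (Rcell L σ).Nonempty
    · exact claimA_ne φ L σ hne
    · obtain ⟨u, hu0, hperp⟩ := exists_perp_of_empty hne
      classical
      set σ₀ : {u // u ∈ L} → SignType := Function.update σ u 0 with hσ₀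
      have hσ₀u : σ₀ u = 0 := by rw [hσ₀]; exact Function.update_self u 0 σ
      have hσ₀v : ∀ v, v ≠ u → σ₀ v = σ v := by
        intro v hv; rw [hσ₀]; exact Function.update_of_ne hv 0 σ
      have hsle0 : sle σ₀ σ := by
        intro v
        by_cases hv : v = u
        · subst hv; right; exact hσ₀u
        · left; exact hσ₀v v hv
      have hDeq : Dcone L (totalize L σ) = Dcone L (totalize L σ₀) := by
        apply Set.Subset.antisymm
        · intro x hx
          rw [mem_Dcone_totalize] at hx ⊢
          intro v
          by_cases hv : v = u
          · subst hv
            rw [hσ₀u]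
            exact scond_of_zero (hperp x (mem_Dcone_totalize.2 hx))
          · rw [hσ₀v v hv]; exact hx v
        · exact Dcone_mono hsle0
      have hidx : ∀ σ', ((Rcell L σ').Nonempty ∧ sle σ' σ) ↔
          ((Rcell L σ').Nonempty ∧ sle σ' σ₀) := by
        intro σ'
        constructor
        · rintro ⟨hne', hsle'⟩
          refine ⟨hne', ?_⟩
          have hzero' : σ' u = 0 := by
            by_contra hσ'u
            obtain ⟨x, hx⟩ := hne'
            have hxD : x ∈ Dcone L (totalize L σ) :=
              Dcone_mono hsle' (Rcell_subset_Dcone σ' hx)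
            exact hσ'u (sconds_zero_unique (hx u) (hperp x hxD))
          intro v
          by_cases hv : v = u
          · subst hv; right; exact hzero'
          · rw [hσ₀v v hv]; exact hsle' v
        · rintro ⟨hne', hsle'⟩
          refine ⟨hne', fun v => ?_⟩
          rcases hsle' v with h | h
          · rcases hsle0 v with h2 | h2
            · left; rw [h, h2]
            · right; rw [h, h2]
          · right; exact h
      have hne0 : σ₀ ≠ σ := by
        intro hc
        exact hu0 (by rw [← hc]; exact hσ₀u)
      have hcard : (suppS σ₀).card ≤ k := by
        have hlt := suppS_card_lt hsle0 hne0
        omega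
      rw [hDeq, IH σ₀ hcard]
      refine (Finset.sum_congr rfl fun σ' _ => ?_).symm
      by_cases hc : (Rcell L σ').Nonempty ∧ sle σ' σ
      · rw [if_pos hc, if_pos ((hidx σ').1 hc)]
      · rw [if_neg hc, if_neg (fun h => hc ((hidx σ').2 h))]

lemma Dcone_congr {L : Finset (E n)} {t t' : E n → Option SignType}
    (h : ∀ u ∈ L, t u = t' u) : Dcone L t = Dcone L t' := by
  ext x
  constructor <;> intro hx u hu s hs
  · exact hx u hu s (by rw [h u hu]; exact hs)
  · exact hx u hu s (by rw [← h u hu]; exact hs)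

lemma compat_congr {L : Finset (E n)} {σ : {u // u ∈ L} → SignType}
    {t t' : E n → Option SignType} (h : ∀ u ∈ L, t u = t' u) :
    compat L σ t ↔ compat L σ t' := by
  constructor <;> intro hc u s hs
  · exact hc u s (by rw [h u u.2]; exact hs)
  · exact hc u s (by rw [← h u u.2]; exact hs)

lemma Dcone_update_pos (L : Finset (E n)) (t : E n → Option SignType) {u : E n}
    (hu : u ∈ L) (hnone : t u = none) :
    Dcone L (Function.update t u (some SignType.pos)) = Dcone L t ∩ {x | 0 ≤ ⟪u, x⟫} :=
  Dcone_update L t hu hnone SignType.pos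

lemma Dcone_update_neg (L : Finset (E n)) (t : E n → Option SignType) {u : E n}
    (hu : u ∈ L) (hnone : t u = none) :
    Dcone L (Function.update t u (some SignType.neg)) = Dcone L t ∩ {x | ⟪u, x⟫ ≤ 0} :=
  Dcone_update L t hu hnone SignType.neg

lemma Dcone_update_zero (L : Finset (E n)) (t : E n → Option SignType) {u : E n}
    (hu : u ∈ L) (hnone : t u = none) :
    Dcone L (Function.update t u (some SignType.zero)) = Dcone L t ∩ {x | ⟪u, x⟫ = 0} :=
  Dcone_update L t hu hnone SignType.zero

lemma claimB_total (φ : Set (E n) → ℝ) (L : Finset (E n)) (t : E n → Option SignType)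
    (hf : L.filter (fun u => t u = none) = ∅) :
    φ (Dcone L t) =
      ∑ σ : {u // u ∈ L} → SignType,
        if (Rcell L σ).Nonempty ∧ compat L σ t then psiW φ L σ else 0 := by
  classical
  have hsome : ∀ u, u ∈ L → ∃ s, t u = some s := by
    intro u hu
    rcases h : t u with _ | s
    · exfalso
      have hmem : u ∈ L.filter (fun u => t u = none) := Finset.mem_filter.2 ⟨hu, h⟩
      rw [hf] at hmem
      exact absurd hmem (Finset.notMem_empty u)
    · exact ⟨s, rfl⟩
  set σt : {u // u ∈ L} → SignType := fun v => ((t v).getD 0) with hσt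
  have hagree : ∀ u ∈ L, t u = totalize L σt u := by
    intro u hu
    obtain ⟨s, hs⟩ := hsome u hu
    rw [totalize, dif_pos hu, hσt]
    simp [hs]
  rw [Dcone_congr hagree, claimA φ L (suppS σt).card σt le_rfl]
  refine (Finset.sum_congr rfl fun σ _ => ?_).symm
  have hiff : compat L σ t ↔ sle σ σt := by
    rw [compat_congr hagree]; exact compat_totalize
  by_cases hc : (Rcell L σ).Nonempty ∧ compat L σ t
  · rw [if_pos hc, if_pos ⟨hc.1, hiff.1 hc.2⟩]
  · rw [if_neg hc, if_neg fun h => hc ⟨h.1, hiff.2 h.2⟩]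

lemma claimB (φ : Set (E n) → ℝ)
    (hweak : ∀ C : Set (E n), IsPolyhedralCone C → ∀ u : E n, u ≠ 0 →
      φ C = φ (C ∩ {x | 0 ≤ ⟪u, x⟫}) + φ (C ∩ {x | ⟪u, x⟫ ≤ 0}) - φ (C ∩ {x | ⟪u, x⟫ = 0}))
    (L : Finset (E n)) (h0L : (0 : E n) ∉ L) :
    ∀ k (t : E n → Option SignType), (L.filter (fun u => t u = none)).card ≤ k →
      φ (Dcone L t) =
        ∑ σ : {u // u ∈ L} → SignType,
          if (Rcell L σ).Nonempty ∧ compat L σ t then psiW φ L σ else 0 := by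
  classical
  intro k
  induction k with
  | zero =>
    intro t ht
    exact claimB_total φ L t (Finset.card_eq_zero.1 (Nat.le_zero.1 ht))
  | succ k IH =>
    intro t ht
    by_cases hf : L.filter (fun u => t u = none) = ∅
    · exact claimB_total φ L t hf
    · obtain ⟨u, hu⟩ := Finset.nonempty_of_ne_empty hf
      have huL : u ∈ L := (Finset.mem_filter.1 hu).1
      have hnone : t u = none := (Finset.mem_filter.1 hu).2
      have hu0 : u ≠ 0 := fun hc => h0L (hc ▸ huL)
      have hcard : ∀ s₀ : SignType,
          (L.filter (fun v => Function.update t u (some s₀) v = none)).card ≤ k := by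
        intro s₀
        have heq : L.filter (fun v => Function.update t u (some s₀) v = none)
            = (L.filter (fun v => t v = none)).erase u := by
          ext v
          simp only [Finset.mem_filter, Finset.mem_erase]
          constructor
          · rintro ⟨hvL, hvn⟩
            have hvu : v ≠ u := by
              intro he; subst he; rw [Function.update_self] at hvn; cases hvn
            rw [Function.update_of_ne hvu] at hvn
            exact ⟨hvu, hvL, hvn⟩
          · rintro ⟨hvu, hvL, hvn⟩
            exact ⟨hvL, by rwa [Function.update_of_ne hvu]⟩
        rw [heq, Finset.card_erase_of_mem hu]
        omega
      have hw := hweak (Dcone L t) (poly_Dcone L t) u hu0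
      rw [← Dcone_update_pos L t huL hnone, ← Dcone_update_neg L t huL hnone,
        ← Dcone_update_zero L t huL hnone] at hw
      rw [hw, IH _ (hcard _), IH _ (hcard _), IH _ (hcard _),
        ← Finset.sum_add_distrib, ← Finset.sum_sub_distrib]
      refine Finset.sum_congr rfl fun σ _ => ?_
      by_cases hA : (Rcell L σ).Nonempty ∧ compat L σ t
      · rcases hσu : σ ⟨u, huL⟩ with _ | _ | _
        · -- zero
          rw [if_pos (⟨hA.1, (compat_update σ t huL hnone SignType.pos).2 ⟨hA.2, Or.inr hσu⟩⟩ :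
              (Rcell L σ).Nonempty ∧ compat L σ (Function.update t u (some SignType.pos))),
            if_pos (⟨hA.1, (compat_update σ t huL hnone SignType.neg).2 ⟨hA.2, Or.inr hσu⟩⟩ :
              (Rcell L σ).Nonempty ∧ compat L σ (Function.update t u (some SignType.neg))),
            if_pos (⟨hA.1, (compat_update σ t huL hnone SignType.zero).2 ⟨hA.2, Or.inr hσu⟩⟩ :
              (Rcell L σ).Nonempty ∧ compat L σ (Function.update t u (some SignType.zero))),
            if_pos hA]
          ring
        · -- neg
          rw [if_neg (fun h => by
              rcases ((compat_update σ t huL hnone SignType.pos).1 h.2).2 with h2 | h2 <;>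
                rw [hσu] at h2 <;> cases h2),
            if_pos (⟨hA.1, (compat_update σ t huL hnone SignType.neg).2 ⟨hA.2, Or.inl hσu⟩⟩ :
              (Rcell L σ).Nonempty ∧ compat L σ (Function.update t u (some SignType.neg))),
            if_neg (fun h => by
              rcases ((compat_update σ t huL hnone SignType.zero).1 h.2).2 with h2 | h2 <;>
                rw [hσu] at h2 <;> cases h2),
            if_pos hA]
          ring
        · -- pos
          rw [if_pos (⟨hA.1, (compat_update σ t huL hnone SignType.pos).2 ⟨hA.2, Or.inl hσu⟩⟩ :
              (Rcell L σ).Nonempty ∧ compat L σ (Function.update t u (some SignType.pos))),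
            if_neg (fun h => by
              rcases ((compat_update σ t huL hnone SignType.neg).1 h.2).2 with h2 | h2 <;>
                rw [hσu] at h2 <;> cases h2),
            if_neg (fun h => by
              rcases ((compat_update σ t huL hnone SignType.zero).1 h.2).2 with h2 | h2 <;>
                rw [hσu] at h2 <;> cases h2),
            if_pos hA]
          ring
      · rw [if_neg hA,
          if_neg (fun h => hA ⟨h.1, ((compat_update σ t huL hnone SignType.pos).1 h.2).1⟩),
          if_neg (fun h => hA ⟨h.1, ((compat_update σ t huL hnone SignType.neg).1 h.2).1⟩),
          if_neg (fun h => hA ⟨h.1, ((compat_update σ t huL hnone SignType.zero).1 h.2).1⟩)]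
        ring

/-- The key decomposition: `φ` of any sign-constrained cone is the sum of the weights
of the nonempty open cells compatible with it. -/
theorem key (φ : Set (E n) → ℝ)
    (hweak : ∀ C : Set (E n), IsPolyhedralCone C → ∀ u : E n, u ≠ 0 →
      φ C = φ (C ∩ {x | 0 ≤ ⟪u, x⟫}) + φ (C ∩ {x | ⟪u, x⟫ ≤ 0}) - φ (C ∩ {x | ⟪u, x⟫ = 0}))
    (L : Finset (E n)) (h0L : (0 : E n) ∉ L) (t : E n → Option SignType) :
    φ (Dcone L t) =
      ∑ σ : {u // u ∈ L} → SignType,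
        if (Rcell L σ).Nonempty ∧ compat L σ t then psiW φ L σ else 0 :=
  claimB φ hweak L h0L _ t le_rfl

end Stmt6Aux
namespace Stmt6Aux

variable {n : ℕ}

theorem crux (φ : Set (E n) → ℝ)
    (hweak : ∀ C : Set (E n), IsPolyhedralCone C → ∀ u : E n, u ≠ 0 →
      φ C = φ (C ∩ {x | 0 ≤ ⟪u, x⟫}) + φ (C ∩ {x | ⟪u, x⟫ ≤ 0}) - φ (C ∩ {x | ⟪u, x⟫ = 0}))
    (c : Set (E n) →₀ ℝ)
    (hc : ∀ C ∈ c.support, IsPolyhedralCone C)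
    (hT : Finsupp.linearCombination ℝ (indc (n := n)) c = 0) :
    Finsupp.linearCombination ℝ φ c = 0 := by
  classical
  set SF : Set (E n) → Finset (E n) := fun C =>
    if h : IsPolyhedralCone C then h.choose else ∅ with hSF
  have hSFspec : ∀ C ∈ c.support, C = {x | ∀ u ∈ SF C, ⟪u, x⟫ ≤ 0} := by
    intro C hCmem
    have h := hc C hCmem
    rw [hSF]; simp only [dif_pos h]
    exact h.choose_spec
  set L : Finset (E n) := (c.support.biUnion SF).erase 0 with hL
  have h0L : (0 : E n) ∉ L := Finset.notMem_erase _ _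
  set tC : Set (E n) → E n → Option SignType := fun C u =>
    if u ∈ SF C then some SignType.neg else none with htC
  have hmemL : ∀ C ∈ c.support, ∀ u ∈ SF C, u ≠ 0 → u ∈ L := by
    intro C hCmem u hu hu0
    exact Finset.mem_erase.2 ⟨hu0, Finset.mem_biUnion.2 ⟨C, hCmem, hu⟩⟩
  have htCval : ∀ C, ∀ u ∈ SF C, tC C u = some SignType.neg := by
    intro C u hu; rw [htC]; simp only [if_pos hu]
  have hDC : ∀ C ∈ c.support, Dcone L (tC C) = C := by
    intro C hCmem
    conv_rhs => rw [hSFspec C hCmem]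
    ext x
    constructor
    · intro hx u hu
      by_cases hu0 : u = 0
      · subst hu0; rw [inner_zero_left]
      · exact hx u (hmemL C hCmem u hu hu0) SignType.neg (htCval C u hu)
    · intro hx u huL s hs
      simp only [htC] at hs
      by_cases hu : u ∈ SF C
      · rw [if_pos hu] at hs
        obtain rfl : SignType.neg = s := Option.some.inj hs
        exact hx u hu
      · rw [if_neg hu] at hs; cases hs
  have hφC : ∀ C ∈ c.support, φ C = ∑ σ : {u // u ∈ L} → SignType,
      (if (Rcell L σ).Nonempty ∧ compat L σ (tC C) then psiW φ L σ else 0) := by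
    intro C hCmem
    conv_lhs => rw [← hDC C hCmem]
    exact key φ hweak L h0L (tC C)
  rw [Finsupp.linearCombination_apply, Finsupp.sum]
  have hstep : ∀ C ∈ c.support, c C • φ C = ∑ σ : {u // u ∈ L} → SignType,
      (if (Rcell L σ).Nonempty ∧ compat L σ (tC C) then c C • psiW φ L σ else 0) := by
    intro C hC
    rw [hφC C hC, Finset.smul_sum]
    exact Finset.sum_congr rfl fun σ _ => by rw [smul_ite, smul_zero]
  rw [Finset.sum_congr rfl hstep, Finset.sum_comm]
  refine Finset.sum_eq_zero fun σ _ => ?_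
  by_cases hne : (Rcell L σ).Nonempty
  · obtain ⟨x, hx⟩ := hne
    have hcompat : ∀ C ∈ c.support, (compat L σ (tC C) ↔ x ∈ C) := by
      intro C hCmem
      constructor
      · intro hcp
        rw [hSFspec C hCmem]
        intro u hu
        by_cases hu0 : u = 0
        · subst hu0; rw [inner_zero_left]
        · have huL : u ∈ L := hmemL C hCmem u hu hu0
          rcases hcp ⟨u, huL⟩ SignType.neg (htCval C u hu) with h | h
          · have hs := hx ⟨u, huL⟩; rw [h] at hs; exact le_of_lt hs
          · have hs := hx ⟨u, huL⟩; rw [h] at hs; exact le_of_eq hs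
      · intro hxC v s hs
        simp only [htC] at hs
        by_cases hvu : (v : E n) ∈ SF C
        · rw [if_pos hvu] at hs
          obtain rfl : SignType.neg = s := Option.some.inj hs
          have hle : ⟪(v : E n), x⟫ ≤ 0 := by
            rw [hSFspec C hCmem] at hxC
            exact hxC (v : E n) hvu
          have hsv := hx v
          rcases h : σ v with _ | _ | _
          · right; rfl
          · left; rfl
          · rw [h] at hsv
            have hsv' : (0 : ℝ) < ⟪(v : E n), x⟫ := hsv
            exact absurd (lt_of_lt_of_le hsv' hle) (lt_irrefl 0)
        · rw [if_neg hvu] at hs; cases hs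
    have hterm : ∀ C ∈ c.support,
        (if (Rcell L σ).Nonempty ∧ compat L σ (tC C) then c C • psiW φ L σ else 0)
          = (if x ∈ C then c C else 0) • psiW φ L σ := by
      intro C hCmem
      by_cases hxC : x ∈ C
      · rw [if_pos hxC, if_pos ⟨⟨x, hx⟩, (hcompat C hCmem).2 hxC⟩]
      · rw [if_neg hxC, zero_smul, if_neg (fun h => hxC ((hcompat C hCmem).1 h.2))]
    rw [Finset.sum_congr rfl hterm, ← Finset.sum_smul]
    have hzero : (∑ C ∈ c.support, if x ∈ C then c C else 0) = 0 := by
      have h0 := congrFun hT x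
      rw [Finsupp.linearCombination_apply, Finsupp.sum] at h0
      rw [Finset.sum_apply] at h0
      simp only [Pi.smul_apply, Pi.zero_apply, indc, smul_eq_mul, mul_ite, mul_one,
        mul_zero] at h0
      exact h0
    rw [hzero, zero_smul]
  · exact Finset.sum_eq_zero fun C _ => if_neg (fun h => hne h.1)

/-- Well-definedness of the extension. -/
theorem welldef (φ : Set (E n) → ℝ)
    (hweak : ∀ C : Set (E n), IsPolyhedralCone C → ∀ u : E n, u ≠ 0 →
      φ C = φ (C ∩ {x | 0 ≤ ⟪u, x⟫}) + φ (C ∩ {x | ⟪u, x⟫ ≤ 0}) - φ (C ∩ {x | ⟪u, x⟫ = 0}))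
    (c c' : Set (E n) →₀ ℝ)
    (hc : ∀ C ∈ c.support, IsPolyhedralCone C)
    (hc' : ∀ C ∈ c'.support, IsPolyhedralCone C)
    (hT : Finsupp.linearCombination ℝ (indc (n := n)) c
        = Finsupp.linearCombination ℝ (indc (n := n)) c') :
    Finsupp.linearCombination ℝ φ c = Finsupp.linearCombination ℝ φ c' := by
  classical
  have h := crux φ hweak (c - c') ?_ ?_
  · rw [map_sub] at h
    linarith [h]
  · intro C hC
    rcases Finset.mem_union.1 (Finsupp.support_sub hC) with h | h
    exacts [hc C h, hc' C h]
  · rw [map_sub, hT, sub_self]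

end Stmt6Aux
namespace Stmt6Aux

variable {n : ℕ}

lemma relint_poly (s : Finset (E n)) :
    intrinsicInterior ℝ {x : E n | ∀ u ∈ s, ⟪u, x⟫ ≤ 0} =
      {x : E n | (∀ u ∈ s, ⟪u, x⟫ ≤ 0) ∧
        ∀ u ∈ s, (¬ ∀ y ∈ {x : E n | ∀ u ∈ s, ⟪u, x⟫ ≤ 0}, ⟪u, y⟫ = 0) → ⟪u, x⟫ < 0} := by
  classical
  set C : Set (E n) := {x : E n | ∀ u ∈ s, ⟪u, x⟫ ≤ 0} with hC
  have h0C : (0 : E n) ∈ C := by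
    intro u _; rw [inner_zero_right]
  have hspan_perp : ∀ u : E n, (∀ y ∈ C, ⟪u, y⟫ = 0) →
      ∀ z ∈ Submodule.span ℝ C, ⟪u, z⟫ = 0 := by
    intro u hu z hz
    induction hz using Submodule.span_induction with
    | mem y hy => exact hu y hy
    | zero => exact inner_zero_right u
    | add y z _ _ hy hz => rw [inner_add_right, hy, hz, add_zero]
    | smul a y _ hy => rw [real_inner_smul_right, hy, mul_zero]
  have haff_sub : ∀ z : E n, z ∈ affineSpan ℝ C → z ∈ Submodule.span ℝ C := by
    intro z hz
    have hle : affineSpan ℝ C ≤ (Submodule.span ℝ C).toAffineSubspace := by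
      apply affineSpan_le.2
      intro y hy
      exact Submodule.subset_span hy
    exact (Submodule.mem_toAffineSubspace).1 (hle hz)
  ext x
  constructor
  · -- ⊆
    intro hx
    have hxC : x ∈ C := intrinsicInterior_subset hx
    refine ⟨hxC, ?_⟩
    intro u hu hP
    push_neg at hP
    obtain ⟨w, hwC, hwne⟩ := hP
    have hwlt : ⟪u, w⟫ < 0 := lt_of_le_of_ne (hwC u hu) hwne
    by_contra hxe
    have hx0 : ⟪u, x⟫ = 0 := le_antisymm (hxC u hu) (not_lt.1 hxe)
    rw [mem_intrinsicInterior] at hx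
    obtain ⟨y, hyint, hyx⟩ := hx
    rw [mem_interior_iff_mem_nhds, Metric.mem_nhds_iff] at hyint
    obtain ⟨ε, hε, hball⟩ := hyint
    set δ : ℝ := ε / (2 * (‖w‖ + 1)) with hδ
    have hδpos : 0 < δ := by positivity
    set z : E n := x - δ • w with hz
    have hzA : z ∈ affineSpan ℝ C := by
      have h1 := AffineSubspace.smul_vsub_vadd_mem (affineSpan ℝ C) (-δ)
        (subset_affineSpan ℝ C hwC) (subset_affineSpan ℝ C h0C) (subset_affineSpan ℝ C hxC)
      have h2 : (-δ) • (w -ᵥ (0 : E n)) +ᵥ x = z := by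
        rw [vsub_eq_sub, sub_zero, vadd_eq_add, hz]
        module
      rwa [h2] at h1
    have hdist : dist (⟨z, hzA⟩ : affineSpan ℝ C) y < ε := by
      rw [Subtype.dist_eq, hyx]
      show dist z x < ε
      rw [dist_eq_norm]
      have h3 : z - x = -(δ • w) := by rw [hz]; abel
      rw [h3, norm_neg, norm_smul, Real.norm_eq_abs, abs_of_pos hδpos]
      have h4 : δ * (‖w‖ + 1) = ε / 2 := by
        rw [hδ]; field_simp
      nlinarith [norm_nonneg w]
    have hzC : z ∈ C := hball (Metric.mem_ball.2 hdist)
    have hfin : ⟪u, z⟫ ≤ 0 := hzC u hu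
    rw [hz, inner_sub_right, hx0, real_inner_smul_right] at hfin
    nlinarith
  · -- ⊇
    rintro ⟨hxC, hxs⟩
    have hxA : x ∈ affineSpan ℝ C := subset_affineSpan ℝ C hxC
    rw [mem_intrinsicInterior]
    refine ⟨⟨x, hxA⟩, ?_, rfl⟩
    set s' : Finset (E n) := s.filter (fun u => ¬ ∀ y ∈ C, ⟪u, y⟫ = 0) with hs'
    set O : Set (E n) := ⋂ u ∈ s', {z : E n | ⟪u, z⟫ < 0} with hO
    have hOopen : IsOpen O := by
      refine isOpen_biInter_finset fun u _ => ?_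
      exact isOpen_lt (continuous_const.inner continuous_id) continuous_const
    have hUopen : IsOpen ((Subtype.val : affineSpan ℝ C → E n) ⁻¹' O) :=
      hOopen.preimage continuous_subtype_val
    have hUsub : ((Subtype.val : affineSpan ℝ C → E n) ⁻¹' O) ⊆
        ((Subtype.val : affineSpan ℝ C → E n) ⁻¹' C) := by
      rintro ⟨z, hzA⟩ hzO
      intro u hu
      by_cases hP : ∀ y ∈ C, ⟪u, y⟫ = 0
      · exact le_of_eq (hspan_perp u hP z (haff_sub z hzA))
      · have hu' : u ∈ s' := Finset.mem_filter.2 ⟨hu, hP⟩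
        have := Set.mem_iInter₂.1 hzO u hu'
        exact le_of_lt this
    have hxU : (⟨x, hxA⟩ : affineSpan ℝ C) ∈
        ((Subtype.val : affineSpan ℝ C → E n) ⁻¹' O) := by
      refine Set.mem_iInter₂.2 fun u hu => ?_
      have hmem := Finset.mem_filter.1 hu
      exact hxs u hmem.1 hmem.2
    exact interior_maximal hUsub hUopen hxU

end Stmt6Aux
namespace Stmt6Aux

variable {n : ℕ}

lemma spanned_ro {A : Set (E n)} (h : IsROCone A) : Spanned (indc A) := by
  classical
  obtain ⟨C₀, hC₀, rfl⟩ := h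
  obtain ⟨s, rfl⟩ := hC₀
  rw [relint_poly s]
  set C : Set (E n) := {x : E n | ∀ u ∈ s, ⟪u, x⟫ ≤ 0} with hCdef
  set s' : Finset (E n) := s.filter (fun u => ¬ ∀ y ∈ C, ⟪u, y⟫ = 0) with hs'
  have hind : indc {x : E n | (∀ u ∈ s, ⟪u, x⟫ ≤ 0) ∧
        ∀ u ∈ s, (¬ ∀ y ∈ C, ⟪u, y⟫ = 0) → ⟪u, x⟫ < 0}
      = indc C * ∏ u ∈ s', ((1 : E n → ℝ) - indc {z : E n | 0 ≤ ⟪u, z⟫}) := by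
    funext x
    rw [Pi.mul_apply, Finset.prod_apply]
    have hfac : ∀ u ∈ s', (((1 : E n → ℝ) - indc {z : E n | 0 ≤ ⟪u, z⟫}) x)
        = if ⟪u, x⟫ < 0 then (1:ℝ) else 0 := by
      intro u _
      rw [Pi.sub_apply, Pi.one_apply, indc]
      simp only [Set.mem_setOf_eq]
      by_cases h : (0:ℝ) ≤ ⟪u, x⟫
      · rw [if_pos h, if_neg (not_lt.2 h)]; ring
      · rw [if_neg h, if_pos (not_le.1 h)]; ring
    rw [Finset.prod_congr rfl hfac]
    by_cases hx1 : x ∈ C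
    · by_cases hx2 : ∀ u ∈ s', ⟪u, x⟫ < 0
      · rw [Finset.prod_eq_one (fun u hu => if_pos (hx2 u hu))]
        rw [indc, if_pos (show x ∈ {x : E n | (∀ u ∈ s, ⟪u, x⟫ ≤ 0) ∧
            ∀ u ∈ s, (¬ ∀ y ∈ C, ⟪u, y⟫ = 0) → ⟪u, x⟫ < 0} from
          ⟨hx1, fun u hu hP => hx2 u (Finset.mem_filter.2 ⟨hu, hP⟩)⟩)]
        rw [indc, if_pos hx1]; ring
      · push_neg at hx2
        obtain ⟨u, hu, hnlt⟩ := hx2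
        have hz : (∏ u ∈ s', if ⟪u, x⟫ < 0 then (1:ℝ) else 0) = 0 :=
          Finset.prod_eq_zero hu (if_neg (not_lt.2 hnlt))
        rw [hz, indc, if_neg (fun hmem => ?_)]
        · ring
        · obtain ⟨hm1, hm2⟩ := hmem
          have hmem' := Finset.mem_filter.1 hu
          exact absurd (hm2 u hmem'.1 hmem'.2) (not_lt.2 hnlt)
    · rw [indc, if_neg (fun hmem => hx1 hmem.1), indc, if_neg hx1]; ring
  rw [hind]
  refine (spanned_indc ⟨s, rfl⟩).mul (spanned_prod s' _ fun u _ => ?_)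
  exact spanned_one.sub (spanned_indc (poly_halfspace u))

lemma spanned_rounion {S : Set (E n)} (h : IsROConeUnion S) : Spanned (indc S) := by
  classical
  obtain ⟨F, hF, rfl⟩ := h
  have hind : indc (⋃₀ (F : Set (Set (E n)))) = 1 - ∏ A ∈ F, ((1 : E n → ℝ) - indc A) := by
    funext x
    rw [Pi.sub_apply, Pi.one_apply, Finset.prod_apply]
    by_cases hx : x ∈ ⋃₀ (F : Set (Set (E n)))
    · obtain ⟨A, hAF, hxA⟩ := id hx
      rw [indc, if_pos hx]
      have hz : (∏ c ∈ F, ((1 : E n → ℝ) - indc c) x) = 0 := by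
        refine Finset.prod_eq_zero (show A ∈ F from hAF) ?_
        rw [Pi.sub_apply, Pi.one_apply, indc, if_pos hxA]; ring
      rw [hz]; ring
    · rw [indc, if_neg hx, Finset.prod_eq_one]
      · ring
      · intro A hA
        rw [Pi.sub_apply, Pi.one_apply, indc,
          if_neg (fun hxA => hx ⟨A, hA, hxA⟩)]
        ring
  rw [hind]
  exact spanned_one.sub (spanned_prod F _ fun A hA => spanned_one.sub (spanned_ro (hF A hA)))

lemma poly_biInter {ι : Type*} {s : Finset ι} (hs : s.Nonempty) (A : ι → Set (E n))
    (hA : ∀ i, IsPolyhedralCone (A i)) : IsPolyhedralCone (⋂ i ∈ s, A i) := by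
  classical
  induction hs using Finset.Nonempty.cons_induction with
  | singleton a => simpa using hA a
  | cons a s ha hs ih =>
    have : (⋂ i ∈ Finset.cons a s ha, A i) = A a ∩ ⋂ i ∈ s, A i := by
      rw [Finset.cons_eq_insert, Finset.set_biInter_insert]
    rw [this]
    exact poly_inter (hA a) ih

/-- The extension of `φ` to the span of indicators. -/
noncomputable def phiExt (φ : Set (E n) → ℝ) : Set (E n) → ℝ := fun S =>
  if h : Spanned (indc S) then Finsupp.linearCombination ℝ φ h.choose else 0

lemma phiExt_eq (φ : Set (E n) → ℝ)
    (hweak : ∀ C : Set (E n), IsPolyhedralCone C → ∀ u : E n, u ≠ 0 →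
      φ C = φ (C ∩ {x | 0 ≤ ⟪u, x⟫}) + φ (C ∩ {x | ⟪u, x⟫ ≤ 0}) - φ (C ∩ {x | ⟪u, x⟫ = 0}))
    {S : Set (E n)} (c : Set (E n) →₀ ℝ)
    (hcp : ∀ C ∈ c.support, IsPolyhedralCone C)
    (hrep : Finsupp.linearCombination ℝ (indc (n := n)) c = indc S) :
    phiExt φ S = Finsupp.linearCombination ℝ φ c := by
  have hsp : Spanned (indc S) := ⟨c, hcp, hrep⟩
  rw [phiExt, dif_pos hsp]
  exact welldef φ hweak _ c hsp.choose_spec.1 hcp (hsp.choose_spec.2.trans hrep.symm)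

end Stmt6Aux
namespace Stmt6Aux

variable {n : ℕ}

lemma alt_sum_powerset {α : Type*} {T : Finset α} (hT : T.Nonempty) :
    ∑ s ∈ T.powerset.filter (fun s : Finset α => s.Nonempty), (-1 : ℝ) ^ (s.card + 1) = 1 := by
  classical
  have hZ := Finset.sum_powerset_neg_one_pow_card (x := T)
  rw [if_neg (Finset.nonempty_iff_ne_empty.1 hT)] at hZ
  have hR : ∑ s ∈ T.powerset, (-1 : ℝ) ^ s.card = 0 := by
    have : ((∑ s ∈ T.powerset, (-1 : ℤ) ^ s.card : ℤ) : ℝ) = ((0 : ℤ) : ℝ) := by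
      rw [hZ]
    push_cast at this
    exact this
  have hsplit := Finset.sum_filter_add_sum_filter_not T.powerset
    (fun s : Finset α => s.Nonempty) (fun s => (-1 : ℝ) ^ s.card)
  have hempty : T.powerset.filter (fun s : Finset α => ¬ s.Nonempty) = {∅} := by
    ext s
    simp [Finset.not_nonempty_iff_eq_empty, Finset.mem_powerset]
    intro h; subst h; exact Finset.empty_subset T
  rw [hempty, Finset.sum_singleton, Finset.card_empty, pow_zero, hR] at hsplit
  have h1 : ∑ s ∈ T.powerset.filter (fun s : Finset α => s.Nonempty), (-1 : ℝ) ^ s.card = -1 := by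
    linarith
  calc ∑ s ∈ T.powerset.filter (fun s : Finset α => s.Nonempty), (-1 : ℝ) ^ (s.card + 1)
      = ∑ s ∈ T.powerset.filter (fun s : Finset α => s.Nonempty), (-1 : ℝ) ^ s.card * (-1) := by
        refine Finset.sum_congr rfl fun s _ => ?_
        rw [pow_succ]
    _ = -1 * (-1) := by rw [← Finset.sum_mul, h1]
    _ = 1 := by ring

theorem main {n : ℕ} (φ : Set (E n) → ℝ) (hempty : φ ∅ = 0)
    (hweak : ∀ C : Set (E n), IsPolyhedralCone C → ∀ u : E n, u ≠ 0 →
      φ C = φ (C ∩ {x | 0 ≤ ⟪u, x⟫}) + φ (C ∩ {x | ⟪u, x⟫ ≤ 0}) - φ (C ∩ {x | ⟪u, x⟫ = 0})) :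
    (∀ (m : ℕ) (A : Fin m → Set (E n)), (∀ i, IsPolyhedralCone (A i)) →
      IsPolyhedralCone (⋃ i, A i) →
      φ (⋃ i, A i) =
        ∑ s ∈ Finset.univ.powerset.filter (fun s : Finset (Fin m) => s.Nonempty),
          (-1 : ℝ) ^ (s.card + 1) * φ (⋂ i ∈ s, A i)) ∧
    ∃ φ' : Set (E n) → ℝ, (∀ C : Set (E n), IsPolyhedralCone C → φ' C = φ C) ∧ φ' ∅ = 0 ∧
      ∀ A B : Set (E n), IsROConeUnion A → IsROConeUnion B →
        φ' (A ∪ B) + φ' (A ∩ B) = φ' A + φ' B := by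
  classical
  have hsingle_supp : ∀ (C : Set (E n)), IsPolyhedralCone C →
      ∀ D ∈ (Finsupp.single C (1:ℝ)).support, IsPolyhedralCone D := by
    intro C hC D hD
    have := Finsupp.support_single_subset hD
    simp only [Finset.mem_singleton] at this
    subst this; exact hC
  have hsingle_rep : ∀ (C : Set (E n)),
      Finsupp.linearCombination ℝ (indc (n := n)) (Finsupp.single C (1:ℝ)) = indc C := by
    intro C
    rw [Finsupp.linearCombination_single, one_smul]
  constructor
  · -- inclusion–exclusion
    intro m A hA hU
    set P : Finset (Finset (Fin m)) :=
      Finset.univ.powerset.filter (fun s : Finset (Fin m) => s.Nonempty) with hP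
    set c₂ : Set (E n) →₀ ℝ :=
      ∑ s ∈ P, Finsupp.single (⋂ i ∈ s, A i) ((-1 : ℝ) ^ (s.card + 1)) with hc₂
    have hc₂supp : ∀ C ∈ c₂.support, IsPolyhedralCone C := by
      intro C hC
      rw [hc₂] at hC
      have h1 := Finsupp.support_finset_sum hC
      rcases Finset.mem_biUnion.1 h1 with ⟨s, hs, hC1⟩
      have h2 := Finsupp.support_single_subset hC1
      simp only [Finset.mem_singleton] at h2
      subst h2
      exact poly_biInter ((Finset.mem_filter.1 hs).2) A hA
    have hTc₂ : Finsupp.linearCombination ℝ (indc (n := n)) c₂ = indc (⋃ i, A i) := by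
      rw [hc₂, map_sum]
      funext x
      rw [Finset.sum_apply]
      have hterm : ∀ s ∈ P,
          (Finsupp.linearCombination ℝ (indc (n := n))
            (Finsupp.single (⋂ i ∈ s, A i) ((-1 : ℝ) ^ (s.card + 1)))) x
          = (-1 : ℝ) ^ (s.card + 1) * (if x ∈ ⋂ i ∈ s, A i then (1:ℝ) else 0) := by
        intro s _
        rw [Finsupp.linearCombination_single, Pi.smul_apply, smul_eq_mul, indc]
      rw [Finset.sum_congr rfl hterm]
      by_cases hx : x ∈ ⋃ i, A i
      · rw [indc, if_pos hx]
        set T : Finset (Fin m) := Finset.univ.filter (fun i => x ∈ A i) with hT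
        have hTne : T.Nonempty := by
          obtain ⟨i, hi⟩ := Set.mem_iUnion.1 hx
          exact ⟨i, Finset.mem_filter.2 ⟨Finset.mem_univ i, hi⟩⟩
        have hmemiff : ∀ s : Finset (Fin m), (x ∈ ⋂ i ∈ s, A i) ↔ s ⊆ T := by
          intro s
          rw [Set.mem_iInter₂]
          constructor
          · intro h i hi
            exact Finset.mem_filter.2 ⟨Finset.mem_univ i, h i hi⟩
          · intro h i hi
            exact (Finset.mem_filter.1 (h hi)).2
        have hstep : ∀ s ∈ P,
            (-1 : ℝ) ^ (s.card + 1) * (if x ∈ ⋂ i ∈ s, A i then (1:ℝ) else 0)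
            = if s ⊆ T then (-1 : ℝ) ^ (s.card + 1) else 0 := by
          intro s _
          by_cases hsT : s ⊆ T
          · rw [if_pos ((hmemiff s).2 hsT), if_pos hsT, mul_one]
          · rw [if_neg (fun h => hsT ((hmemiff s).1 h)), if_neg hsT, mul_zero]
        rw [Finset.sum_congr rfl hstep, ← Finset.sum_filter]
        have hPT : P.filter (fun s => s ⊆ T) =
            T.powerset.filter (fun s : Finset (Fin m) => s.Nonempty) := by
          ext s
          simp only [hP, Finset.mem_filter, Finset.mem_powerset]
          constructor
          · rintro ⟨⟨_, hne⟩, hsub⟩; exact ⟨hsub, hne⟩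
          · rintro ⟨hsub, hne⟩; exact ⟨⟨Finset.subset_univ s, hne⟩, hsub⟩
        rw [hPT, alt_sum_powerset hTne]
      · rw [indc, if_neg hx]
        refine Finset.sum_eq_zero fun s hs => ?_
        have hne := (Finset.mem_filter.1 hs).2
        obtain ⟨i, hi⟩ := hne
        rw [if_neg, mul_zero]
        intro hmem
        exact hx (Set.mem_iUnion.2 ⟨i, Set.mem_iInter₂.1 hmem i hi⟩)
    have hwd := welldef φ hweak (Finsupp.single (⋃ i, A i) (1:ℝ)) c₂
      (hsingle_supp _ hU) hc₂supp (by rw [hsingle_rep, hTc₂])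
    rw [Finsupp.linearCombination_single, one_smul] at hwd
    rw [hwd, hc₂, map_sum]
    refine Finset.sum_congr rfl fun s _ => ?_
    rw [Finsupp.linearCombination_single, smul_eq_mul]
  · -- the extension
    refine ⟨phiExt φ, ?_, ?_, ?_⟩
    · intro C hC
      rw [phiExt_eq φ hweak (Finsupp.single C (1:ℝ)) (hsingle_supp C hC) (hsingle_rep C),
        Finsupp.linearCombination_single, one_smul]
    · have hrep0 : Finsupp.linearCombination ℝ (indc (n := n)) (0 : Set (E n) →₀ ℝ)
          = indc (∅ : Set (E n)) := by
        rw [map_zero]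
        funext x
        rw [indc, if_neg (Set.notMem_empty x), Pi.zero_apply]
      rw [phiExt_eq φ hweak 0 (by simp) hrep0, map_zero]
    · intro A B hA hB
      have hspA : Spanned (indc A) := spanned_rounion hA
      have hspB : Spanned (indc B) := spanned_rounion hB
      have hspI : Spanned (indc (A ∩ B)) := by
        rw [indc_inter]; exact hspA.mul hspB
      have hspU : Spanned (indc (A ∪ B)) := by
        have heq : indc (A ∪ B) = indc A + indc B - indc (A ∩ B) :=
          eq_sub_of_add_eq (indc_union_add_inter A B)
        rw [heq]
        exact (hspA.add hspB).sub hspI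
      obtain ⟨cA, hcA, hrA⟩ := hspA
      obtain ⟨cB, hcB, hrB⟩ := hspB
      obtain ⟨cI, hcI, hrI⟩ := hspI
      obtain ⟨cU, hcU, hrU⟩ := hspU
      rw [phiExt_eq φ hweak cU hcU hrU, phiExt_eq φ hweak cI hcI hrI,
        phiExt_eq φ hweak cA hcA hrA, phiExt_eq φ hweak cB hcB hrB]
      have hwd := welldef φ hweak (cU + cI) (cA + cB) ?_ ?_ ?_
      · rw [map_add, map_add] at hwd
        linarith
      · intro C hC
        rcases Finset.mem_union.1 (Finsupp.support_add hC) with h | h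
        exacts [hcU C h, hcI C h]
      · intro C hC
        rcases Finset.mem_union.1 (Finsupp.support_add hC) with h | h
        exacts [hcA C h, hcB C h]
      · rw [map_add, map_add, hrU, hrI, hrA, hrB, indc_union_add_inter]

end Stmt6Aux
/-- Every weakly additive real function on convex polyhedral cones is fully additive
and admits an additive extension to finite unions of relatively open polyhedral cones. -/
theorem stmt6 {n : ℕ} (φ : Set (E n) → ℝ) (hempty : φ ∅ = 0)
    (hweak : ∀ C : Set (E n), IsPolyhedralCone C → ∀ u : E n, u ≠ 0 →
      φ C = φ (C ∩ {x | 0 ≤ ⟪u, x⟫}) + φ (C ∩ {x | ⟪u, x⟫ ≤ 0}) - φ (C ∩ {x | ⟪u, x⟫ = 0})) :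
    (∀ (m : ℕ) (A : Fin m → Set (E n)), (∀ i, IsPolyhedralCone (A i)) →
      IsPolyhedralCone (⋃ i, A i) →
      φ (⋃ i, A i) =
        ∑ s ∈ Finset.univ.powerset.filter (fun s : Finset (Fin m) => s.Nonempty),
          (-1 : ℝ) ^ (s.card + 1) * φ (⋂ i ∈ s, A i)) ∧
    ∃ φ' : Set (E n) → ℝ, (∀ C : Set (E n), IsPolyhedralCone C → φ' C = φ C) ∧ φ' ∅ = 0 ∧
      ∀ A B : Set (E n), IsROConeUnion A → IsROConeUnion B →
        φ' (A ∪ B) + φ' (A ∩ B) = φ' A + φ' B := by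
  exact Stmt6Aux.main φ hempty hweak
end
end

section
/- Fix x ∈ ℝⁿ and a hyperplane H through x, and let L be the translate of H through the origin. Then for every polyhedron P ⊂ ℝⁿ, Tan(P ∩ H⁺, x) = Tan(P, x) ∩ L⁺, where H⁺ is a closed halfspace bounded by H and L⁺ the corresponding halfspace bounded by L. -/
open scoped RealInnerProductSpace
open MeasureTheory

attribute [local instance] Classical.propDecidable

noncomputable section

/-- For a hyperplane `H` through `x` with normal `u` and `L` its translate through the
origin, `Tan(P ∩ H⁺, x) = Tan(P, x) ∩ L⁺` for every polyhedron `P`. -/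
theorem stmt7 {n : ℕ} (x u : E n) (hu : u ≠ 0) (P : Set (E n)) (hP : IsPolyhedron P) :
    Tan (P ∩ {y | ⟪u, x⟫ ≤ ⟪u, y⟫}) x = Tan P x ∩ {v | 0 ≤ ⟪u, v⟫} := by
  ext v
  simp only [Tan, Set.mem_setOf_eq, Set.mem_inter_iff]
  constructor
  · rintro ⟨l, hl, hseg⟩
    refine ⟨⟨l, hl, fun p hp => (hseg hp).1⟩, ?_⟩
    have h := (hseg (right_mem_segment ℝ x (x + l • v))).2
    simp only [Set.mem_setOf_eq, inner_add_right, inner_smul_right] at h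
    nlinarith
  · rintro ⟨⟨l, hl, hseg⟩, hv⟩
    refine ⟨l, hl, fun p hp => ⟨hseg hp, ?_⟩⟩
    obtain ⟨a, b, ha, hb, hab, rfl⟩ := hp
    simp only [Set.mem_setOf_eq, inner_add_right, inner_smul_right]
    have h1 : (0:ℝ) ≤ b * (l * inner ℝ u v) := mul_nonneg hb (mul_nonneg hl.le hv)
    have h2 : a * (inner ℝ u x : ℝ) + b * (inner ℝ u x + l * inner ℝ u v)
        = inner ℝ u x + b * (l * inner ℝ u v) := by
      linear_combination (inner ℝ u x : ℝ) * hab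
    rw [h2]; linarith
end
end
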